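/- arXiv:1401.2973 — 2 statements merged into one kernel-verified Lean document; each statement's English description precedes it below -/
import Mathlib

section
/- Let G be a graph with a cycle double cover D, let G^+ be a weak non-conforming T-edge enlargement of G with vertices u, x, y as in the definition (x adjacent to y, u not confluent with the edge xy; G^+ is obtained from G by subdividing xy and joining u to the new vertex). If G minus the vertex set {u, x, y} is connected, then G^+ has a minor isomorphic to a type-1 enlargement (non-conforming jump), a type-3 enlargement (non-conforming split), or a type-9 enlargement (non-conforming T-edge) of G. -/
open SimpleGraph

universe u v

/-! ### Basic connectivity notions -/

/-- A graph is 3-connected: at least 4 vertices and deleting any ≤ 2 vertices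
leaves a connected graph. -/
def ThreeConnected {V : Type u} (G : SimpleGraph V) : Prop :=
  4 ≤ Nat.card V ∧
    ∀ s : Set V, s.ncard ≤ 2 → ((⊤ : G.Subgraph).deleteVerts s).coe.Connected

/-- A separation of `G`: `A ∪ B = V(G)` and no edge between `A \ B` and `B \ A`. -/
def Separation {V : Type u} (G : SimpleGraph V) (A B : Set V) : Prop :=
  A ∪ B = Set.univ ∧ ∀ a ∈ A \ B, ∀ b ∈ B \ A, ¬ G.Adj a b

/-- The edges of `G` induced by a vertex set `A`. -/
def inducedEdges {V : Type u} (G : SimpleGraph V) (A : Set V) : Set (Sym2 V) :=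
  {e ∈ G.edgeSet | ∀ x ∈ e, x ∈ A}

/-- Weakly 4-connected: 3-connected, at least 5 vertices, and every separation of order
at most three has a side inducing at most 4 edges. -/
def WeaklyFourConnected {V : Type u} (G : SimpleGraph V) : Prop :=
  ThreeConnected G ∧ 5 ≤ Nat.card V ∧
    ∀ A B : Set V, Separation G A B → (A ∩ B).ncard ≤ 3 →
      (inducedEdges G A).ncard ≤ 4 ∨ (inducedEdges G B).ncard ≤ 4

/-! ### Vertex splitting and expansions -/

/-- Valid data for splitting vertex `v`: `N1, N2` partition the neighborhood of `v`
with each part of size at least 2. -/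
def IsValidSplitData {V : Type u} (G : SimpleGraph V) (v : V) (N1 N2 : Set V) : Prop :=
  N1 ∪ N2 = G.neighborSet v ∧ Disjoint N1 N2 ∧ 2 ≤ N1.ncard ∧ 2 ≤ N2.ncard

/-- The graph obtained by splitting vertex `v` according to the partition `N1, N2`.
The vertex `some v` plays the role of `v₁` and `none` plays the role of `v₂`;
vertices `some a` for `a ≠ v` are the old vertices. -/
def splitGraph {V : Type u} (G : SimpleGraph V) (v : V) (N1 N2 : Set V) :
    SimpleGraph (Option V) :=
  SimpleGraph.fromRel (fun x y =>
    (∃ a b, x = some a ∧ y = some b ∧ a ≠ v ∧ b ≠ v ∧ G.Adj a b) ∨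
    (x = some v ∧ ∃ b ∈ N1, y = some b) ∨
    (x = none ∧ ∃ b ∈ N2, y = some b) ∨
    (x = none ∧ y = some v))

/-- `IsExpansion G G' π newE`: `G'` is obtained from `G` by repeatedly splitting
vertices of degree at least four; `π` maps each vertex of `G'` to the vertex of `G`
it arose from (so the branch-sets are the fibres of `π`) and `newE` is the set of
new edges created by the splits. -/
inductive IsExpansion {V : Type u} (G : SimpleGraph V) :
    {W : Type u} → SimpleGraph W → (W → V) → Set (Sym2 W) → Prop
  | refl : IsExpansion G G id ∅
  | step {W : Type u} {G' : SimpleGraph W} {π : W → V} {newE : Set (Sym2 W)}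
      (h : IsExpansion G G' π newE) (v : W) (N1 N2 : Set W)
      (hs : IsValidSplitData G' v N1 N2) :
      IsExpansion G (splitGraph G' v N1 N2) (fun w => π (w.getD v))
        (Sym2.map some '' newE ∪ {s(some v, none)})

/-! ### Minors -/

/-- `G` is isomorphic to a minor of `H`: there are disjoint nonempty connected
branch sets in `H`, one for each vertex of `G`, with edges of `G` realized by
edges of `H` between the corresponding branch sets. -/
def IsMinorOf {V : Type u} {W : Type v} (G : SimpleGraph V) (H : SimpleGraph W) : Prop :=
  ∃ f : V → Set W,
    (∀ a, (f a).Nonempty) ∧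
    (∀ a, (H.induce (f a)).Connected) ∧
    (∀ a b, a ≠ b → Disjoint (f a) (f b)) ∧
    (∀ a b, G.Adj a b → ∃ x ∈ f a, ∃ y ∈ f b, H.Adj x y)

/-! ### Cycles, segments, disk systems -/

/-- A subgraph is a cycle: nonempty, connected, and every vertex has exactly
two neighbours in it. -/
def IsCycleSub {V : Type u} {G : SimpleGraph V} (C : G.Subgraph) : Prop :=
  C.verts.Nonempty ∧ C.Connected ∧ ∀ w ∈ C.verts, (C.neighborSet w).ncard = 2

/-- A subgraph is a path: nonempty, connected, maximum degree at most two, and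
some vertex of degree at most one. -/
def IsPathSub {V : Type u} {G : SimpleGraph V} (P : G.Subgraph) : Prop :=
  P.verts.Nonempty ∧ P.Connected ∧ (∀ w ∈ P.verts, (P.neighborSet w).ncard ≤ 2) ∧
    ∃ w ∈ P.verts, (P.neighborSet w).ncard ≤ 1

/-- A segment of `G`: a maximal path (with at least one edge) all of whose internal
vertices have degree exactly two in `G`. -/
def IsSegment {V : Type u} (G : SimpleGraph V) (P : G.Subgraph) : Prop :=
  IsPathSub P ∧ P.edgeSet.Nonempty ∧
    (∀ w ∈ P.verts, (P.neighborSet w).ncard = 2 → (G.neighborSet w).ncard = 2) ∧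
    (∀ w ∈ P.verts, (P.neighborSet w).ncard ≤ 1 → (G.neighborSet w).ncard ≠ 2)

/-- Axiom (D1): a cycle double cover: a set of cycles such that every edge of `G`
lies on exactly two of them. -/
def IsCDC {V : Type u} (G : SimpleGraph V) (D : Set G.Subgraph) : Prop :=
  (∀ C ∈ D, IsCycleSub C) ∧ ∀ e ∈ G.edgeSet, {C ∈ D | e ∈ C.edgeSet}.ncard = 2

/-- Axiom (D2): at every vertex the incident edges admit a cyclic order in which
every pair of consecutive edges lies on exactly one common disk. -/
def AxiomD2 {V : Type u} (G : SimpleGraph V) (D : Set G.Subgraph) : Prop :=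
  ∀ w : V, ∃ σ : Equiv.Perm (G.neighborSet w),
    (∀ x y, σ.SameCycle x y) ∧
    ∀ u : G.neighborSet w,
      {C ∈ D | s(w, (u : V)) ∈ C.edgeSet ∧ s(w, ((σ u : G.neighborSet w) : V)) ∈ C.edgeSet}.ncard = 1

/-- Axiom (D3): any two distinct disks intersect in at most one vertex or in a segment. -/
def AxiomD3 {V : Type u} (G : SimpleGraph V) (D : Set G.Subgraph) : Prop :=
  ∀ C1 ∈ D, ∀ C2 ∈ D, C1 ≠ C2 → (C1 ⊓ C2).verts.Subsingleton ∨ IsSegment G (C1 ⊓ C2)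

/-- A weak disk system: a cycle double cover satisfying (D3). -/
def IsWeakDiskSystem {V : Type u} (G : SimpleGraph V) (D : Set G.Subgraph) : Prop :=
  IsCDC G D ∧ AxiomD3 G D

/-- A disk system: a cycle double cover satisfying (D2) and (D3). -/
def IsDiskSystem {V : Type u} (G : SimpleGraph V) (D : Set G.Subgraph) : Prop :=
  IsCDC G D ∧ AxiomD2 G D ∧ AxiomD3 G D

/-- Two vertices are confluent if a common disk contains both. -/
def ConfluentVV {V : Type u} {G : SimpleGraph V} (D : Set G.Subgraph) (x y : V) : Prop :=
  ∃ C ∈ D, x ∈ C.verts ∧ y ∈ C.verts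

/-- A vertex is confluent with an edge if a common disk contains both. -/
def ConfluentVE {V : Type u} {G : SimpleGraph V} (D : Set G.Subgraph) (x : V) (e : Sym2 V) : Prop :=
  ∃ C ∈ D, x ∈ C.verts ∧ e ∈ C.edgeSet

/-- Two edges are confluent if a common disk contains both. -/
def ConfluentEE {V : Type u} {G : SimpleGraph V} (D : Set G.Subgraph) (e f : Sym2 V) : Prop :=
  ∃ C ∈ D, e ∈ C.edgeSet ∧ f ∈ C.edgeSet

/-! ### Conforming splits -/

/-- The split of `v` along disks `D1, D2`: it is a valid split and, among the disks
through `v`, exactly `D1` and `D2` meet both `N1` and `N2`, and they intersect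
precisely in `v` (axioms (S1) and (S2)). -/
def SplitConformingWith {V : Type u} (G : SimpleGraph V) (D : Set G.Subgraph) (v : V)
    (N1 N2 : Set V) (D1 D2 : G.Subgraph) : Prop :=
  IsValidSplitData G v N1 N2 ∧ D1 ∈ D ∧ D2 ∈ D ∧ D1 ≠ D2 ∧
    {C ∈ D | v ∈ C.verts ∧ (C.verts ∩ N1).Nonempty ∧ (C.verts ∩ N2).Nonempty} = {D1, D2} ∧
    (D1 ⊓ D2).verts = {v}

/-- A conforming split (with respect to `D`). -/
def IsConformingSplit {V : Type u} (G : SimpleGraph V) (D : Set G.Subgraph) (v : V)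
    (N1 N2 : Set V) : Prop :=
  ∃ D1 D2, SplitConformingWith G D v N1 N2 D1 D2

/-- A conforming split along the disk `C`. -/
def IsConformingSplitAlong {V : Type u} (G : SimpleGraph V) (D : Set G.Subgraph) (v : V)
    (N1 N2 : Set V) (C : G.Subgraph) : Prop :=
  ∃ E, SplitConformingWith G D v N1 N2 C E ∨ SplitConformingWith G D v N1 N2 E C

/-- `C'` (a cycle of the split graph) lifts the cycle `C` of `G`: contracting the new
edge maps `C'` onto `C`. -/
def DiskLift {V : Type u} (G : SimpleGraph V) (v : V) {N1 N2 : Set V}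
    (C' : (splitGraph G v N1 N2).Subgraph) (C : G.Subgraph) : Prop :=
  C.verts = (fun w : Option V => w.getD v) '' C'.verts ∧
  C.edgeSet = Sym2.map (fun w : Option V => w.getD v) '' C'.edgeSet \ {s(v, v)}

/-- The disk system induced in the split graph: the cycles that lift disks of `D`. -/
def InducedDisks {V : Type u} (G : SimpleGraph V) (D : Set G.Subgraph) (v : V)
    (N1 N2 : Set V) : Set (splitGraph G v N1 N2).Subgraph :=
  {C' | IsCycleSub C' ∧ ∃ C ∈ D, DiskLift G v C' C}

/-- Conforming expansions, together with the induced disk system and the set of new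
edges. Each successive split is conforming with respect to the disk system induced
so far. -/
inductive IsConformingExpansion {V : Type u} (G : SimpleGraph V) (D : Set G.Subgraph) :
    {W : Type u} → (G' : SimpleGraph W) → Set G'.Subgraph → Set (Sym2 W) → Prop
  | refl : IsConformingExpansion G D G D ∅
  | step {W : Type u} {G' : SimpleGraph W} {D' : Set G'.Subgraph} {newE : Set (Sym2 W)}
      (h : IsConformingExpansion G D G' D' newE) (v : W) (N1 N2 : Set W)
      (hc : IsConformingSplit G' D' v N1 N2) :
      IsConformingExpansion G D (splitGraph G' v N1 N2) (InducedDisks G' D' v N1 N2)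
        (Sym2.map some '' newE ∪ {s(some v, none)})

/-- A non-conforming expansion: a conforming expansion followed by a non-conforming
split, followed by an arbitrary further expansion. -/
def IsNonConformingExpansion {V W : Type u} (G : SimpleGraph V) (D : Set G.Subgraph)
    (H : SimpleGraph W) : Prop :=
  ∃ (W₁ : Type u) (G₁ : SimpleGraph W₁) (D₁ : Set G₁.Subgraph) (newE₁ : Set (Sym2 W₁)),
    IsConformingExpansion G D G₁ D₁ newE₁ ∧
    ∃ (v : W₁) (N1 N2 : Set W₁), IsValidSplitData G₁ v N1 N2 ∧
      ¬ IsConformingSplit G₁ D₁ v N1 N2 ∧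
      ∃ (π : W → Option W₁) (newE : Set (Sym2 W)),
        IsExpansion (splitGraph G₁ v N1 N2) H π newE

/-! ### Building blocks for the enlargement operations -/

/-- Add the edge `uv` to `G`. -/
def addE {V : Type u} (G : SimpleGraph V) (x y : V) : SimpleGraph V :=
  G ⊔ SimpleGraph.fromEdgeSet {s(x, y)}

/-- Add a new vertex (`none`) adjacent exactly to the vertices of `S`. -/
def addVertexAdj {V : Type u} (G : SimpleGraph V) (S : Set V) : SimpleGraph (Option V) :=
  SimpleGraph.fromRel (fun x y =>
    (∃ a b, x = some a ∧ y = some b ∧ G.Adj a b) ∨ (x = none ∧ ∃ a ∈ S, y = some a))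

/-- Subdivide the edge `xy` (the new vertex is `none`) and join `u` to the new vertex. -/
def subdivideJoin {V : Type u} (G : SimpleGraph V) (x y u : V) : SimpleGraph (Option V) :=
  SimpleGraph.fromRel (fun a b =>
    (∃ p q, a = some p ∧ b = some q ∧ G.Adj p q ∧ s(p, q) ≠ s(x, y)) ∨
    (a = none ∧ (b = some x ∨ b = some y ∨ b = some u)))

/-- Subdivide the edges `ab` and `cd` (new vertices `some none` and `none`) and join
the two new vertices by an edge. -/
def doubleSubdivideJoin {V : Type u} (G : SimpleGraph V) (a b c d : V) :
    SimpleGraph (Option (Option V)) :=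
  SimpleGraph.fromRel (fun p q =>
    (∃ x y, p = some (some x) ∧ q = some (some y) ∧ G.Adj x y ∧
        s(x, y) ≠ s(a, b) ∧ s(x, y) ≠ s(c, d)) ∨
    (p = some none ∧ (q = some (some a) ∨ q = some (some b))) ∨
    (p = none ∧ (q = some (some c) ∨ q = some (some d) ∨ q = some none)))

/-- `a, b, c, d` occur on the cycle `C` in this cyclic order (in one of the two
orientations): `{a,c}` separates `b` from `d` on `C` and vice versa. -/
def CyclicOrderOn {V : Type u} {G : SimpleGraph V} (C : G.Subgraph) (a b c d : V) : Prop :=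
  a ∈ C.verts ∧ b ∈ C.verts ∧ c ∈ C.verts ∧ d ∈ C.verts ∧
  [a, b, c, d].Nodup ∧
  (∀ (hb : b ∈ (C.deleteVerts {a, c}).verts) (hd : d ∈ (C.deleteVerts {a, c}).verts),
    ¬ (C.deleteVerts {a, c}).coe.Reachable ⟨b, hb⟩ ⟨d, hd⟩) ∧
  (∀ (ha : a ∈ (C.deleteVerts {b, d}).verts) (hc : c ∈ (C.deleteVerts {b, d}).verts),
    ¬ (C.deleteVerts {b, d}).coe.Reachable ⟨a, ha⟩ ⟨c, hc⟩)

/-! ### The enlargement operations, phrased as "H has a minor isomorphic to a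
type-i enlargement of G with respect to D" -/

/-- Type 1 (non-conforming jump). -/
def HasType1Minor {V : Type u} {U : Type v} (G : SimpleGraph V) (D : Set G.Subgraph)
    (H : SimpleGraph U) : Prop :=
  ∃ x y : V, x ≠ y ∧ ¬ ConfluentVV D x y ∧ IsMinorOf (addE G x y) H

/-- Type 2 (cross). -/
def HasType2Minor {V : Type u} {U : Type v} (G : SimpleGraph V) (D : Set G.Subgraph)
    (H : SimpleGraph U) : Prop :=
  ∃ C ∈ D, ∃ a b c d : V, CyclicOrderOn C a b c d ∧
    IsMinorOf (addE (addE G a c) b d) H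

/-- Type 3 (non-conforming split). -/
def HasType3Minor {V : Type u} {U : Type v} (G : SimpleGraph V) (D : Set G.Subgraph)
    (H : SimpleGraph U) : Prop :=
  ∃ (w : V) (N1 N2 : Set V), IsValidSplitData G w N1 N2 ∧
    ¬ IsConformingSplit G D w N1 N2 ∧ IsMinorOf (splitGraph G w N1 N2) H

/-- Type 4 (split + non-conforming jump). In `splitGraph G v N1 N2` the vertices
`some v` and `none` play the roles of `v₁` and `v₂`. -/
def HasType4Minor {V : Type u} {U : Type v} (G : SimpleGraph V) (D : Set G.Subgraph)
    (H : SimpleGraph U) : Prop :=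
  ∃ C ∈ D, ∃ x w : V, x ∈ C.verts ∧ w ∈ C.verts ∧ ¬ G.Adj x w ∧ x ≠ w ∧
    ∃ N1 N2 : Set V, IsConformingSplit G D w N1 N2 ∧
      ¬ ConfluentVV (InducedDisks G D w N1 N2) (some x) none ∧
      IsMinorOf (addE (splitGraph G w N1 N2) (some x) none) H

/-- Type 5 (double split + non-conforming jump). -/
def HasType5Minor {V : Type u} {U : Type v} (G : SimpleGraph V) (D : Set G.Subgraph)
    (H : SimpleGraph U) : Prop :=
  ∃ x w : V, G.Adj x w ∧ ∃ C1 ∈ D, ∃ C2 ∈ D, C1 ≠ C2 ∧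
    s(x, w) ∈ C1.edgeSet ∧ s(x, w) ∈ C2.edgeSet ∧
    ∃ M1 M2 : Set V, IsConformingSplitAlong G D x M1 M2 C1 ∧ w ∈ M1 ∧
    ∃ C2' ∈ InducedDisks G D x M1 M2, DiskLift G x C2' C2 ∧
    ∃ P1 P2 : Set (Option V),
      IsConformingSplitAlong (splitGraph G x M1 M2) (InducedDisks G D x M1 M2)
        (some w) P1 P2 C2' ∧ (some x) ∈ P1 ∧
      IsMinorOf (addE (splitGraph (splitGraph G x M1 M2) (some w) P1 P2)
        (some none) none) H

/-- Type 6 (split + cross). -/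
def HasType6Minor {V : Type u} {U : Type v} (G : SimpleGraph V) (D : Set G.Subgraph)
    (H : SimpleGraph U) : Prop :=
  ∃ C ∈ D, ∃ x w z : V, x ∈ C.verts ∧ w ∈ C.verts ∧ z ∈ C.verts ∧
    ¬ G.Adj x w ∧ ¬ G.Adj x z ∧ w ≠ z ∧ x ≠ w ∧ x ≠ z ∧
    ∃ N1 N2 : Set V, IsConformingSplitAlong G D x N1 N2 C ∧
    ∃ C' ∈ InducedDisks G D x N1 N2, DiskLift G x C' C ∧
      CyclicOrderOn C' (some x) none (some w) (some z) ∧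
      IsMinorOf (addE (addE (splitGraph G x N1 N2) (some x) (some w)) none (some z)) H

/-- Type 7 (double split + cross). -/
def HasType7Minor {V : Type u} {U : Type v} (G : SimpleGraph V) (D : Set G.Subgraph)
    (H : SimpleGraph U) : Prop :=
  ∃ C ∈ D, ∃ x w : V, x ∈ C.verts ∧ w ∈ C.verts ∧ ¬ G.Adj x w ∧ x ≠ w ∧
    ∃ M1 M2 : Set V, IsConformingSplitAlong G D x M1 M2 C ∧
    ∃ C' ∈ InducedDisks G D x M1 M2, DiskLift G x C' C ∧
    ∃ P1 P2 : Set (Option V),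
      IsConformingSplitAlong (splitGraph G x M1 M2) (InducedDisks G D x M1 M2)
        (some w) P1 P2 C' ∧
    ∃ C'' ∈ InducedDisks (splitGraph G x M1 M2) (InducedDisks G D x M1 M2) (some w) P1 P2,
      DiskLift (splitGraph G x M1 M2) (some w) C'' C' ∧
      CyclicOrderOn C'' (some (some x)) (some none) (some (some w)) none ∧
      IsMinorOf (addE (addE (splitGraph (splitGraph G x M1 M2) (some w) P1 P2)
        (some (some x)) (some (some w))) (some none) none) H

/-- Weak type 8 (weak triad): add a vertex adjacent to three vertices not all on
a common disk. -/
def HasWeakType8Minor {V : Type u} {U : Type v} (G : SimpleGraph V) (D : Set G.Subgraph)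
    (H : SimpleGraph U) : Prop :=
  ∃ x1 x2 x3 : V, x1 ≠ x2 ∧ x1 ≠ x3 ∧ x2 ≠ x3 ∧
    (¬ ∃ C ∈ D, x1 ∈ C.verts ∧ x2 ∈ C.verts ∧ x3 ∈ C.verts) ∧
    IsMinorOf (addVertexAdj G {x1, x2, x3}) H

/-- Type 8 (non-separating triad). -/
def HasType8Minor {V : Type u} {U : Type v} (G : SimpleGraph V) (D : Set G.Subgraph)
    (H : SimpleGraph U) : Prop :=
  ∃ x1 x2 x3 : V, x1 ≠ x2 ∧ x1 ≠ x3 ∧ x2 ≠ x3 ∧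
    ConfluentVV D x1 x2 ∧ ConfluentVV D x1 x3 ∧ ConfluentVV D x2 x3 ∧
    (¬ ∃ C ∈ D, x1 ∈ C.verts ∧ x2 ∈ C.verts ∧ x3 ∈ C.verts) ∧
    ¬ G.Adj x1 x2 ∧ ¬ G.Adj x1 x3 ∧ ¬ G.Adj x2 x3 ∧
    ((⊤ : G.Subgraph).deleteVerts {x1, x2, x3}).coe.Connected ∧
    IsMinorOf (addVertexAdj G {x1, x2, x3}) H

/-- Weak type 9 (weak non-conforming T-edge). -/
def HasWeakType9Minor {V : Type u} {U : Type v} (G : SimpleGraph V) (D : Set G.Subgraph)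
    (H : SimpleGraph U) : Prop :=
  ∃ x y z : V, G.Adj x y ∧ ¬ ConfluentVE D z s(x, y) ∧
    IsMinorOf (subdivideJoin G x y z) H

/-- Type 9 (non-conforming T-edge). -/
def HasType9Minor {V : Type u} {U : Type v} (G : SimpleGraph V) (D : Set G.Subgraph)
    (H : SimpleGraph U) : Prop :=
  ∃ x y z : V, G.Adj x y ∧ ¬ ConfluentVE D z s(x, y) ∧
    ConfluentVV D z x ∧ ConfluentVV D z y ∧ ¬ G.Adj z x ∧ ¬ G.Adj z y ∧
    ((⊤ : G.Subgraph).deleteVerts {z, x, y}).coe.Connected ∧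
    IsMinorOf (subdivideJoin G x y z) H

/-! ### Prism, peripheral cycles, planarity -/

/-- The prism: the complement of a 6-cycle on six vertices. -/
def prismGraph : SimpleGraph (Fin 6) :=
  (SimpleGraph.fromRel (fun i j : Fin 6 => j = i + 1))ᶜ

def IsPrism {V : Type u} (G : SimpleGraph V) : Prop :=
  Nonempty (G ≃g prismGraph)

/-- A peripheral cycle: an induced cycle whose deletion leaves a connected graph. -/
def IsPeripheral {V : Type u} (G : SimpleGraph V) (C : G.Subgraph) : Prop :=
  IsCycleSub C ∧ C.IsInduced ∧ ((⊤ : G.Subgraph).deleteVerts C.verts).coe.Connected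

/-- The set of all peripheral cycles of `G`. -/
def peripheralDisks {V : Type u} (G : SimpleGraph V) : Set G.Subgraph :=
  {C | IsPeripheral G C}

/-- Planarity, encoded via Wagner's theorem: no `K₅` and no `K₃,₃` minor. -/
def IsPlanar {V : Type u} (G : SimpleGraph V) : Prop :=
  ¬ IsMinorOf (completeGraph (Fin 5)) G ∧
  ¬ IsMinorOf (completeBipartiteGraph (Fin 3) (Fin 3)) G

/-- Type 10 (the enlargement of a prism, i.e. `V₈`). -/
def HasType10Minor {V : Type u} {U : Type v} (G : SimpleGraph V) (H : SimpleGraph U) : Prop :=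
  IsPrism G ∧ ∃ a b c d : V, G.Adj a b ∧ G.Adj c d ∧ s(a, b) ≠ s(c, d) ∧
    (∃ t, G.Adj a t ∧ G.Adj b t) ∧ (∃ t, G.Adj c t ∧ G.Adj d t) ∧
    (¬ ∃ C : G.Subgraph, IsPeripheral G C ∧ s(a, b) ∈ C.edgeSet ∧ s(c, d) ∈ C.edgeSet) ∧
    IsMinorOf (doubleSubdivideJoin G a b c d) H

/-! ### Subdivisions -/

/-- Data witnessing that `S` is (isomorphic to) a subdivision of `Gb`:
an injection `f` of branch-vertices together with internally disjoint paths of `S`,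
one for each edge of `Gb`, covering `S`. -/
structure SubdivisionData {V : Type u} {W : Type v} (S : SimpleGraph V)
    (Gb : SimpleGraph W) where
  f : W → V
  path : ∀ a b : W, Gb.Adj a b → S.Walk (f a) (f b)
  inj : Function.Injective f
  isPath : ∀ a b hab, (path a b hab).IsPath
  symmSupport : ∀ a b (hab : Gb.Adj a b),
    (path b a hab.symm).support = (path a b hab).support.reverse
  interDisj : ∀ a b hab c d hcd, s(a, b) ≠ s(c, d) →
    ∀ x, x ∈ (path a b hab).support → x ∈ (path c d hcd).support → x ∈ Set.range f
  branchOnPath : ∀ a b hab (w : W), f w ∈ (path a b hab).support → w = a ∨ w = b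
  coverV : ∀ x : V, x ∈ Set.range f ∨ ∃ a b hab, x ∈ (path a b hab).support
  coverE : ∀ e ∈ S.edgeSet, ∃ a b hab, e ∈ (path a b hab).edges

/-- `G` is a subdivision of `Gb`. -/
def IsSubdivisionOf {V : Type u} {W : Type v} (S : SimpleGraph V) (Gb : SimpleGraph W) : Prop :=
  Nonempty (SubdivisionData S Gb)

/-- The cycle of the subdivision corresponding to a cycle `C` of the base graph
(the union of the paths replacing the edges of `C`). -/
def SubdivisionData.inducedDisk {V : Type u} {W : Type v} {S : SimpleGraph V}
    {Gb : SimpleGraph W} (sd : SubdivisionData S Gb) (C : Gb.Subgraph) : S.Subgraph where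
  verts := {x | ∃ (a b : W) (hC : C.Adj a b), x ∈ (sd.path a b (C.adj_sub hC)).support}
  Adj x y := ∃ (a b : W) (hC : C.Adj a b), s(x, y) ∈ (sd.path a b (C.adj_sub hC)).edges
  adj_sub := by
    rintro x y ⟨a, b, hC, he⟩
    exact (SimpleGraph.mem_edgeSet S).mp ((sd.path a b (C.adj_sub hC)).edges_subset_edgeSet he)
  edge_vert := by
    rintro x y ⟨a, b, hC, he⟩
    exact ⟨a, b, hC, SimpleGraph.Walk.fst_mem_support_of_mem_edges _ he⟩
  symm := by
    refine ⟨?_⟩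
    rintro x y ⟨a, b, hC, he⟩
    exact ⟨a, b, hC, by rwa [Sym2.eq_swap]⟩

/-- The weak disk system induced in the subdivision by a system of the base graph. -/
def SubdivisionData.inducedDisks {V : Type u} {W : Type v} {S : SimpleGraph V}
    {Gb : SimpleGraph W} (sd : SubdivisionData S Gb) (D : Set Gb.Subgraph) :
    Set S.Subgraph :=
  sd.inducedDisk '' D

/-! ### Bridges and locally planar extensions -/

/-- `B` is an `S`-bridge of `H`: either a single edge of `H` not in `S` with both ends
in `S`, or a component of `H − V(S)` together with all edges to `S`. -/
def IsBridgeOf {U : Type u} {H : SimpleGraph U} (S B : H.Subgraph) : Prop :=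
  (∃ x y : U, H.Adj x y ∧ s(x, y) ∉ S.edgeSet ∧ x ∈ S.verts ∧ y ∈ S.verts ∧
      B.verts = {x, y} ∧ ∀ p q, B.Adj p q ↔ s(p, q) = s(x, y)) ∨
  (∃ J : Set U, J.Nonempty ∧ J ∩ S.verts = ∅ ∧
    (∀ x ∈ J, ∀ y, H.Adj x y → y ∉ S.verts → y ∈ J) ∧ (H.induce J).Connected ∧
    B.verts = J ∪ {y ∈ S.verts | ∃ x ∈ J, H.Adj x y} ∧
    ∀ p q, B.Adj p q ↔ (H.Adj p q ∧ (p ∈ J ∨ q ∈ J)))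

/-- The induced system `D` (of cycles of `S.coe`) is locally planar in `H`:
every bridge attaches to a single disk, and for each disk the union of the disk
with its bridges has a planar drawing with the disk bounding the unbounded face
(encoded: adding an apex vertex joined to the disk keeps the graph planar). -/
def LocallyPlanar {U : Type u} (H : SimpleGraph U) (S : H.Subgraph)
    (D : Set S.coe.Subgraph) : Prop :=
  ∃ φ : H.Subgraph → S.coe.Subgraph,
    (∀ B, IsBridgeOf S B → φ B ∈ D ∧
      ∀ x ∈ B.verts ∩ S.verts, x ∈ Subtype.val '' (φ B).verts) ∧
    ∀ C ∈ D, IsPlanar (addVertexAdj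
      ((SimpleGraph.Subgraph.coeSubgraph C ⊔
        ⨆ B ∈ {B : H.Subgraph | IsBridgeOf S B ∧ φ B = C}, B).coe)
      {x | (x : U) ∈ Subtype.val '' C.verts})

/-- The disk system `D` of `G` has a locally planar extension into `H`. -/
def HasLocallyPlanarExtension {V U : Type u} (G : SimpleGraph V) (D : Set G.Subgraph)
    (H : SimpleGraph U) : Prop :=
  ∃ (W : Type u) (G' : SimpleGraph W) (D' : Set G'.Subgraph) (newE : Set (Sym2 W)),
    IsConformingExpansion G D G' D' newE ∧
    ∃ (S : H.Subgraph) (sd : SubdivisionData S.coe G'),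
      LocallyPlanar H S (sd.inducedDisks D')

/-! ### Degenerate separations -/

/-- A degenerate separation of order three. -/
def Degenerate {V : Type u} (G : SimpleGraph V) (A B : Set V) : Prop :=
  ((A \ B).ncard = 1 ∧ ∀ x ∈ A ∩ B, ∀ y ∈ A ∩ B, ¬ G.Adj x y) ∨
  (∃ v1 v2 v3 u1 u2 u3 : V, A ∩ B = {v1, v2, v3} ∧
    v1 ≠ v2 ∧ v1 ≠ v3 ∧ v2 ≠ v3 ∧
    u1 ∈ A ∧ u2 ∈ A ∧ u3 ∈ A ∧ G.Adj u1 u2 ∧ G.Adj u1 u3 ∧ G.Adj u2 u3 ∧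
    (u1 = v1 ∨ G.Adj u1 v1) ∧ (u2 = v2 ∨ G.Adj u2 v2) ∧ (u3 = v3 ∨ G.Adj u3 v3) ∧
    A ⊆ {u1, u2, u3, v1, v2, v3} ∧
    ∀ x ∈ A, ∀ y ∈ A, G.Adj x y →
      s(x, y) ∈ ({s(u1, v1), s(u2, v2), s(u3, v3),
                  s(u1, u2), s(u1, u3), s(u2, u3)} : Set (Sym2 V)))
/-! ### Helper lemmas -/


lemma wt_induce_singleton_connected {W : Type u} (H : SimpleGraph W) (a : W) :
    (H.induce {a}).Connected := by
  rw [connected_iff]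
  refine ⟨fun u v => ?_, ⟨⟨a, rfl⟩⟩⟩
  have hu : (u : W) = a := u.2
  have hv : (v : W) = a := v.2
  have : u = v := Subtype.ext (hu.trans hv.symm)
  exact this ▸ Reachable.refl u

lemma wt_induce_pair_connected_of_adj {W : Type u} {H : SimpleGraph W} {u v : W}
    (h : H.Adj u v) : (H.induce {u, v}).Connected := by
  rw [connected_iff]
  refine ⟨fun a b => ?_, ⟨⟨u, by simp⟩⟩⟩
  have key : ∀ c : ({u, v} : Set W), (H.induce {u, v}).Reachable ⟨u, by simp⟩ c := by
    rintro ⟨c, hc⟩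
    simp only [Set.mem_insert_iff, Set.mem_singleton_iff] at hc
    obtain rfl | rfl := hc
    · exact Reachable.refl _
    · exact Adj.reachable (by simp [h])
  exact (key a).symm.trans (key b)

lemma isMinorOf_refl {W : Type u} (H : SimpleGraph W) : IsMinorOf H H :=
  ⟨fun a => {a}, fun a => ⟨a, rfl⟩, fun a => wt_induce_singleton_connected H a,
    fun a b hab => by simpa [Set.disjoint_singleton] using hab,
    fun a b h => ⟨a, rfl, b, rfl, h⟩⟩

lemma three_distinct_not_pair {α : Type u} {s : Set α} (h : s.ncard = 2) {a b c : α}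
    (ha : a ∈ s) (hb : b ∈ s) (hc : c ∈ s) (hab : a ≠ b) (hac : a ≠ c) (hbc : b ≠ c) :
    False := by
  obtain ⟨p, q, hpq, rfl⟩ := Set.ncard_eq_two.mp h
  simp only [Set.mem_insert_iff, Set.mem_singleton_iff] at ha hb hc
  rcases ha with rfl | rfl <;> rcases hb with rfl | rfl <;> rcases hc with rfl | rfl <;>
    simp_all

lemma two_disks {V : Type u} {G : SimpleGraph V} {D : Set G.Subgraph}
    (hCDC : IsCDC G D) {u v : V} (huv : G.Adj u v) :
    ∃ C1 C2 : G.Subgraph, C1 ∈ D ∧ C2 ∈ D ∧ C1 ≠ C2 ∧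
      s(u, v) ∈ C1.edgeSet ∧ s(u, v) ∈ C2.edgeSet ∧ IsCycleSub C1 ∧ IsCycleSub C2 := by
  have h2 := hCDC.2 s(u, v) huv
  obtain ⟨C1, C2, h12, hset⟩ := Set.ncard_eq_two.mp h2
  have h1 : C1 ∈ {C ∈ D | s(u,v) ∈ C.edgeSet} := by rw [hset]; simp
  have h2' : C2 ∈ {C ∈ D | s(u,v) ∈ C.edgeSet} := by rw [hset]; simp
  exact ⟨C1, C2, h1.1, h2'.1, h12, h1.2, h2'.2, hCDC.1 C1 h1.1, hCDC.1 C2 h2'.1⟩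

lemma second_neighbor {V : Type u} {G : SimpleGraph V} {C : G.Subgraph}
    (hC : IsCycleSub C) {u v : V} (huv : C.Adj u v) :
    ∃ a, C.Adj u a ∧ a ≠ v := by
  have hu : u ∈ C.verts := C.edge_vert huv
  obtain ⟨p, q, hpq, hset⟩ := Set.ncard_eq_two.mp (hC.2.2 u hu)
  have hv : v ∈ ({p, q} : Set V) := hset ▸ huv
  have hp : p ∈ C.neighborSet u := by rw [hset]; simp
  have hq : q ∈ C.neighborSet u := by rw [hset]; simp
  simp only [Set.mem_insert_iff, Set.mem_singleton_iff] at hv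
  rcases hv with rfl | rfl
  · exact ⟨q, hq, fun h => hpq h.symm⟩
  · exact ⟨p, hp, hpq⟩

lemma subdivideJoin_adj {V : Type u} (G : SimpleGraph V) (x y u : V) (a b : Option V) :
    (subdivideJoin G x y u).Adj a b ↔ a ≠ b ∧
      ((∃ p q, a = some p ∧ b = some q ∧ G.Adj p q ∧ s(p, q) ≠ s(x, y)) ∨
       (a = none ∧ (b = some x ∨ b = some y ∨ b = some u)) ∨
       (∃ p q, b = some p ∧ a = some q ∧ G.Adj p q ∧ s(p, q) ≠ s(x, y)) ∨
       (b = none ∧ (a = some x ∨ a = some y ∨ a = some u))) := by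
  rw [subdivideJoin, fromRel_adj]
  constructor
  · rintro ⟨h1, (h | h) | (h | h)⟩
    exacts [⟨h1, Or.inl h⟩, ⟨h1, Or.inr (Or.inl h)⟩,
      ⟨h1, Or.inr (Or.inr (Or.inl h))⟩, ⟨h1, Or.inr (Or.inr (Or.inr h))⟩]
  · rintro ⟨h1, h | h | h | h⟩
    exacts [⟨h1, Or.inl (Or.inl h)⟩, ⟨h1, Or.inl (Or.inr h)⟩,
      ⟨h1, Or.inr (Or.inl h)⟩, ⟨h1, Or.inr (Or.inr h)⟩]

lemma sdJ_some_some {V : Type u} {G : SimpleGraph V} {x y u : V} {a b : V}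
    (hab : G.Adj a b) (hne : s(a, b) ≠ s(x, y)) :
    (subdivideJoin G x y u).Adj (some a) (some b) := by
  rw [subdivideJoin_adj]
  exact ⟨by simpa using hab.ne, Or.inl ⟨a, b, rfl, rfl, hab, hne⟩⟩

lemma sdJ_none_x {V : Type u} (G : SimpleGraph V) (x y u : V) :
    (subdivideJoin G x y u).Adj none (some x) := by
  rw [subdivideJoin_adj]; exact ⟨by simp, Or.inr (Or.inl ⟨rfl, Or.inl rfl⟩)⟩

lemma sdJ_none_y {V : Type u} (G : SimpleGraph V) (x y u : V) :
    (subdivideJoin G x y u).Adj none (some y) := by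
  rw [subdivideJoin_adj]; exact ⟨by simp, Or.inr (Or.inl ⟨rfl, Or.inr (Or.inl rfl)⟩)⟩

lemma sdJ_none_u {V : Type u} (G : SimpleGraph V) (x y u : V) :
    (subdivideJoin G x y u).Adj none (some u) := by
  rw [subdivideJoin_adj]; exact ⟨by simp, Or.inr (Or.inl ⟨rfl, Or.inr (Or.inr rfl)⟩)⟩

lemma subdivideJoin_comm {V : Type u} (G : SimpleGraph V) (x y u : V) :
    subdivideJoin G x y u = subdivideJoin G y x u := by
  ext a b
  rw [subdivideJoin_adj, subdivideJoin_adj]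
  have hs : s(y, x) = s(x, y) := Sym2.eq_swap
  constructor <;>
      rintro ⟨h1, ⟨p, q, ha, hb, hadj, hne⟩ | ⟨ha, hb | hb | hb⟩ |
        ⟨p, q, ha, hb, hadj, hne⟩ | ⟨ha, hb | hb | hb⟩⟩ <;>
      refine ⟨h1, ?_⟩
  · exact Or.inl ⟨p, q, ha, hb, hadj, by rw [hs]; exact hne⟩
  · exact Or.inr (Or.inl ⟨ha, Or.inr (Or.inl hb)⟩)
  · exact Or.inr (Or.inl ⟨ha, Or.inl hb⟩)
  · exact Or.inr (Or.inl ⟨ha, Or.inr (Or.inr hb)⟩)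
  · exact Or.inr (Or.inr (Or.inl ⟨p, q, ha, hb, hadj, by rw [hs]; exact hne⟩))
  · exact Or.inr (Or.inr (Or.inr ⟨ha, Or.inr (Or.inl hb)⟩))
  · exact Or.inr (Or.inr (Or.inr ⟨ha, Or.inl hb⟩))
  · exact Or.inr (Or.inr (Or.inr ⟨ha, Or.inr (Or.inr hb)⟩))
  · exact Or.inl ⟨p, q, ha, hb, hadj, by rw [← hs]; exact hne⟩
  · exact Or.inr (Or.inl ⟨ha, Or.inr (Or.inl hb)⟩)
  · exact Or.inr (Or.inl ⟨ha, Or.inl hb⟩)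
  · exact Or.inr (Or.inl ⟨ha, Or.inr (Or.inr hb)⟩)
  · exact Or.inr (Or.inr (Or.inl ⟨p, q, ha, hb, hadj, by rw [← hs]; exact hne⟩))
  · exact Or.inr (Or.inr (Or.inr ⟨ha, Or.inr (Or.inl hb)⟩))
  · exact Or.inr (Or.inr (Or.inr ⟨ha, Or.inl hb⟩))
  · exact Or.inr (Or.inr (Or.inr ⟨ha, Or.inr (Or.inr hb)⟩))

lemma type1_aux {V : Type u} (G : SimpleGraph V) (D : Set G.Subgraph) (x y z : V)
    (hxy : G.Adj x y) (hzx : z ≠ x) (hzy : z ≠ y) (hnc : ¬ ConfluentVV D z x) :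
    HasType1Minor G D (subdivideJoin G x y z) := by
  classical
  set f : V → Set (Option V) := fun v => if v = x then {some x, none} else {some v} with hf
  have hfx : f x = {some x, none} := by simp [hf]
  have hfv : ∀ v, v ≠ x → f v = {some v} := fun v hv => by simp [hf, hv]
  refine ⟨z, x, hzx, hnc, f, ?_, ?_, ?_, ?_⟩
  · intro a
    by_cases h : a = x
    · rw [h, hfx]; exact ⟨some x, by simp⟩
    · rw [hfv a h]; exact ⟨some a, rfl⟩
  · intro a
    by_cases h : a = x
    · rw [h, hfx]; exact wt_induce_pair_connected_of_adj (sdJ_none_x G x y z).symm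
    · rw [hfv a h]; exact wt_induce_singleton_connected _ _
  · intro a b hab
    by_cases ha : a = x <;> by_cases hb : b = x
    · exact absurd (ha.trans hb.symm) hab
    · rw [ha, hfx, hfv b hb]
      rw [Set.disjoint_singleton_right]
      simp [hb]
    · rw [hb, hfx, hfv a ha]
      rw [Set.disjoint_singleton_left]
      simp [ha]
    · rw [hfv a ha, hfv b hb, Set.disjoint_singleton]
      simp [hab]
  · intro a b hab
    rw [addE, sup_adj, fromEdgeSet_adj] at hab
    rcases hab with hab | ⟨he, hne⟩
    · by_cases ha : a = x <;> by_cases hb : b = x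
      · exact absurd (ha.trans hb.symm) hab.ne
      · by_cases hby : b = y
        · exact ⟨none, by rw [ha, hfx]; simp, some y, by rw [hfv b hb, hby]; exact rfl,
            sdJ_none_y G x y z⟩
        · have hadj : G.Adj x b := by rwa [ha] at hab
          refine ⟨some x, by rw [ha, hfx]; simp, some b, by rw [hfv b hb]; exact rfl,
            sdJ_some_some hadj ?_⟩
          simp only [ne_eq, Sym2.eq_iff]; push_neg
          exact ⟨fun _ => hby, fun h => absurd h hxy.ne⟩
      · by_cases hay : a = y
        · exact ⟨some y, by rw [hfv a ha, hay]; exact rfl, none, by rw [hb, hfx]; simp,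
            (sdJ_none_y G x y z).symm⟩
        · have hadj : G.Adj a x := by rwa [hb] at hab
          refine ⟨some a, by rw [hfv a ha]; exact rfl, some x, by rw [hb, hfx]; simp,
            sdJ_some_some hadj ?_⟩
          simp only [ne_eq, Sym2.eq_iff]; push_neg
          exact ⟨fun _ => hxy.ne, fun h => absurd h hay⟩
      · refine ⟨some a, by rw [hfv a ha]; exact rfl, some b, by rw [hfv b hb]; exact rfl,
          sdJ_some_some hab ?_⟩
        simp only [ne_eq, Sym2.eq_iff]; push_neg
        exact ⟨fun h => absurd h ha, fun _ => hb⟩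
    · simp only [Set.mem_singleton_iff, Sym2.eq_iff] at he
      rcases he with ⟨ha, hb⟩ | ⟨ha, hb⟩
      · refine ⟨some z, by rw [hfv a (ha ▸ hzx), ha]; exact rfl, none, by rw [hb, hfx]; simp,
          (sdJ_none_u G x y z).symm⟩
      · refine ⟨none, by rw [ha, hfx]; simp, some z, by rw [hfv b (hb ▸ hzx), hb]; exact rfl,
          sdJ_none_u G x y z⟩

lemma type3_aux {V : Type u} [Fintype V] (G : SimpleGraph V) (D : Set G.Subgraph)
    (hCDC : IsCDC G D) (x y z : V) (hxy : G.Adj x y) (hxz : G.Adj x z)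
    (hnc : ¬ ConfluentVE D z s(x, y)) :
    HasType3Minor G D (subdivideJoin G x y z) := by
  classical
  obtain ⟨E1, E2, hE1D, hE2D, hE12, hE1e, hE2e, hcE1, hcE2⟩ := two_disks hCDC hxy
  obtain ⟨C1, C2, hC1D, hC2D, hC12, hC1e, hC2e, hcC1, hcC2⟩ := two_disks hCDC hxz
  have hE1a : E1.Adj x y := Subgraph.mem_edgeSet.mp hE1e
  have hE2a : E2.Adj x y := Subgraph.mem_edgeSet.mp hE2e
  have hC1a : C1.Adj x z := Subgraph.mem_edgeSet.mp hC1e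
  have hC2a : C2.Adj x z := Subgraph.mem_edgeSet.mp hC2e
  have hzy : z ≠ y := fun h => hnc ⟨E1, hE1D, h ▸ E1.edge_vert hE1a.symm, hE1e⟩
  have hzx : z ≠ x := fun h => hnc ⟨E1, hE1D, h ▸ E1.edge_vert hE1a, hE1e⟩
  have hzC1 : z ∈ C1.verts := C1.edge_vert hC1a.symm
  have hzC2 : z ∈ C2.verts := C2.edge_vert hC2a.symm
  have cross : ∀ C' ∈ D, s(x, y) ∈ C'.edgeSet → z ∈ C'.verts → False :=
    fun C' h1 h2 h3 => hnc ⟨C', h1, h3, h2⟩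
  have hE1C1 : E1 ≠ C1 := fun h => cross E1 hE1D hE1e (h ▸ hzC1)
  have hE1C2 : E1 ≠ C2 := fun h => cross E1 hE1D hE1e (h ▸ hzC2)
  have hE2C1 : E2 ≠ C1 := fun h => cross E2 hE2D hE2e (h ▸ hzC1)
  have hE2C2 : E2 ≠ C2 := fun h => cross E2 hE2D hE2e (h ▸ hzC2)
  obtain ⟨a1, ha1adj, ha1y⟩ := second_neighbor hcE1 hE1a
  obtain ⟨a2, ha2adj, ha2y⟩ := second_neighbor hcE2 hE2a
  obtain ⟨b1, hb1adj, hb1z⟩ := second_neighbor hcC1 hC1a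
  have ha1z : a1 ≠ z := fun h => cross E1 hE1D hE1e (h ▸ E1.edge_vert ha1adj.symm)
  have ha2z : a2 ≠ z := fun h => cross E2 hE2D hE2e (h ▸ E2.edge_vert ha2adj.symm)
  have hb1y : b1 ≠ y :=
    fun h => cross C1 hC1D (Subgraph.mem_edgeSet.mpr (h ▸ hb1adj)) hzC1
  set N1 : Set V := {y, z} with hN1
  set N2 : Set V := G.neighborSet x \ {y, z} with hN2
  have hsub : ({y, z} : Set V) ⊆ G.neighborSet x := by
    intro w hw
    simp only [Set.mem_insert_iff, Set.mem_singleton_iff] at hw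
    rcases hw with rfl | rfl
    exacts [hxy, hxz]
  have memN2 : ∀ w, G.Adj x w → w ≠ y → w ≠ z → w ∈ N2 :=
    fun w h hy hz => ⟨h, by simp [hy, hz]⟩
  have ha1N2 : a1 ∈ N2 := memN2 a1 (E1.adj_sub ha1adj) ha1y ha1z
  have ha2N2 : a2 ∈ N2 := memN2 a2 (E2.adj_sub ha2adj) ha2y ha2z
  have hb1N2 : b1 ∈ N2 := memN2 b1 (C1.adj_sub hb1adj) hb1y hb1z
  have hvalid : IsValidSplitData G x N1 N2 := by
    refine ⟨Set.union_diff_cancel hsub, disjoint_sdiff_self_right, ?_, ?_⟩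
    · exact le_of_eq (Set.ncard_pair (Ne.symm hzy)).symm
    · by_cases h12 : a1 = b1
      · by_cases h13 : a1 = a2
        · exfalso
          refine three_distinct_not_pair (hCDC.2 s(x, a1) (E1.adj_sub ha1adj))
            (a := E1) (b := E2) (c := C1) ⟨hE1D, Subgraph.mem_edgeSet.mpr ha1adj⟩
            ⟨hE2D, Subgraph.mem_edgeSet.mpr (h13 ▸ ha2adj)⟩
            ⟨hC1D, Subgraph.mem_edgeSet.mpr (h12 ▸ hb1adj)⟩ hE12 hE1C1 hE2C1
        · exact (Set.one_lt_ncard_iff (Set.toFinite _)).mpr ⟨a1, a2, ha1N2, ha2N2, h13⟩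
      · exact (Set.one_lt_ncard_iff (Set.toFinite _)).mpr ⟨a1, b1, ha1N2, hb1N2, h12⟩
  have hxE1 : x ∈ E1.verts := E1.edge_vert hE1a
  have hxE2 : x ∈ E2.verts := E2.edge_vert hE2a
  have hxC1 : x ∈ C1.verts := C1.edge_vert hC1a
  have hnconf : ¬ IsConformingSplit G D x N1 N2 := by
    rintro ⟨D1, D2, hvalid', hD1D, hD2D, hD12, hset, hint⟩
    have hmem : ∀ C' : G.Subgraph, C' ∈ D → x ∈ C'.verts → (C'.verts ∩ N1).Nonempty →
        (C'.verts ∩ N2).Nonempty → C' = D1 ∨ C' = D2 := by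
      intro C' h1 h2 h3 h4
      have : C' ∈ ({D1, D2} : Set G.Subgraph) := hset ▸ ⟨h1, h2, h3, h4⟩
      simpa using this
    have m1 := hmem E1 hE1D hxE1 ⟨y, E1.edge_vert hE1a.symm, by simp [hN1]⟩
      ⟨a1, E1.edge_vert ha1adj.symm, ha1N2⟩
    have m2 := hmem E2 hE2D hxE2 ⟨y, E2.edge_vert hE2a.symm, by simp [hN1]⟩
      ⟨a2, E2.edge_vert ha2adj.symm, ha2N2⟩
    have m3 := hmem C1 hC1D hxC1 ⟨z, hzC1, by simp [hN1]⟩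
      ⟨b1, C1.edge_vert hb1adj.symm, hb1N2⟩
    rcases m1 with h | h <;> rcases m2 with h' | h' <;> rcases m3 with h'' | h'' <;>
      first
        | exact hE12 (h.trans h'.symm)
        | exact hE1C1 (h.trans h''.symm)
        | exact hE2C1 (h'.trans h''.symm)
  set g : Option V → Option V :=
    fun w => if w = some x then none else if w = none then some x else w with hg
  have hgg : ∀ w, g (g w) = w := by
    intro w
    rcases w with _ | a
    · simp [hg]
    · by_cases hax : a = x <;> simp [hg, hax]
  have hginj : Function.Injective g := Function.LeftInverse.injective hgg
  have hkey : ∀ p q : Option V,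
      ((∃ a b, p = some a ∧ q = some b ∧ a ≠ x ∧ b ≠ x ∧ G.Adj a b) ∨
       (p = some x ∧ ∃ b ∈ N1, q = some b) ∨
       (p = none ∧ ∃ b ∈ N2, q = some b) ∨
       (p = none ∧ q = some x)) → (subdivideJoin G x y z).Adj (g p) (g q) := by
    rintro p q (⟨a, b, rfl, rfl, hax, hbx, hab⟩ | ⟨rfl, b, hbN1, rfl⟩ |
      ⟨rfl, b, hbN2, rfl⟩ | ⟨rfl, rfl⟩)
    · have hga : g (some a) = some a := by simp [hg, hax]
      have hgb : g (some b) = some b := by simp [hg, hbx]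
      rw [hga, hgb]
      refine sdJ_some_some hab ?_
      simp only [ne_eq, Sym2.eq_iff]; push_neg
      exact ⟨fun h => absurd h hax, fun _ => hbx⟩
    · have hgp : g (some x) = none := by simp [hg]
      have hb : b = y ∨ b = z := by simpa [hN1] using hbN1
      have hbx : b ≠ x := by rcases hb with rfl | rfl; exacts [hxy.ne', hzx]
      have hgq : g (some b) = some b := by simp [hg, hbx]
      rw [hgp, hgq]
      rcases hb with hb | hb <;> rw [hb]
      · exact sdJ_none_y G x y z
      · exact sdJ_none_u G x y z
    · have hgp : g none = some x := by simp [hg]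
      have hbN2' := hbN2
      rw [hN2] at hbN2'
      obtain ⟨h1, h2⟩ := hbN2'
      simp only [Set.mem_insert_iff, Set.mem_singleton_iff, not_or] at h2
      obtain ⟨hby, hbz⟩ := h2
      have hadj : G.Adj x b := h1
      have hbx : b ≠ x := hadj.ne'
      have hgq : g (some b) = some b := by simp [hg, hbx]
      rw [hgp, hgq]
      refine sdJ_some_some hadj ?_
      simp only [ne_eq, Sym2.eq_iff]; push_neg
      exact ⟨fun _ => hby, fun h => absurd h hxy.ne⟩
    · have hgp : g none = some x := by simp [hg]
      have hgq : g (some x) = none := by simp [hg]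
      rw [hgp, hgq]
      exact (sdJ_none_x G x y z).symm
  refine ⟨x, N1, N2, hvalid, hnconf, fun w => {g w}, fun w => ⟨g w, rfl⟩,
    fun w => wt_induce_singleton_connected _ _, fun p q hne => ?_, ?_⟩
  · rw [Set.disjoint_singleton]
    exact fun h => hne (hginj h)
  · intro p q hadj
    rw [splitGraph, fromRel_adj] at hadj
    obtain ⟨hne, h | h⟩ := hadj
    · exact ⟨g p, rfl, g q, rfl, hkey p q h⟩
    · exact ⟨g p, rfl, g q, rfl, (hkey q p h).symm⟩


/-- if `G − {u,x,y}` is connected, a weak non-conforming T-edge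
enlargement has a minor isomorphic to a type-1, type-3 or type-9 enlargement. -/
theorem weak_tedge_upgrade {V : Type u} [Fintype V]
    (G : SimpleGraph V) (D : Set G.Subgraph) (hD : IsWeakDiskSystem G D)
    (x y z : V) (hxy : G.Adj x y) (hnc : ¬ ConfluentVE D z s(x, y))
    (hconn : ((⊤ : G.Subgraph).deleteVerts {z, x, y}).coe.Connected) :
    HasType1Minor G D (subdivideJoin G x y z) ∨
    HasType3Minor G D (subdivideJoin G x y z) ∨
    HasType9Minor G D (subdivideJoin G x y z) := by
  classical
  obtain ⟨hCDC, -⟩ := hD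
  obtain ⟨E1, E2, hE1D, hE2D, hE12, hE1e, hE2e, hcE1, hcE2⟩ := two_disks hCDC hxy
  have hE1a : E1.Adj x y := Subgraph.mem_edgeSet.mp hE1e
  have hzx : z ≠ x := fun h => hnc ⟨E1, hE1D, h ▸ E1.edge_vert hE1a, hE1e⟩
  have hzy : z ≠ y := fun h => hnc ⟨E1, hE1D, h ▸ E1.edge_vert hE1a.symm, hE1e⟩
  by_cases hax : G.Adj z x
  · exact Or.inr (Or.inl (type3_aux G D hCDC x y z hxy hax.symm hnc))
  by_cases hay : G.Adj z y
  · refine Or.inr (Or.inl ?_)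
    rw [subdivideJoin_comm]
    refine type3_aux G D hCDC y x z hxy.symm hay.symm ?_
    rw [Sym2.eq_swap]
    exact hnc
  by_cases hcx : ConfluentVV D z x
  · by_cases hcy : ConfluentVV D z y
    · exact Or.inr (Or.inr ⟨x, y, z, hxy, hnc, hcx, hcy, hax, hay, hconn,
        isMinorOf_refl _⟩)
    · refine Or.inl ?_
      rw [subdivideJoin_comm]
      exact type1_aux G D y x z hxy.symm hzy hzx hcy
  · exact Or.inl (type1_aux G D x y z hxy hzx hzy hcx)
end

section
/- Let G1 be a graph isomorphic to a minor of a weakly 4-connected graph H, and let (P, Q, R) be a partition of V(G1) with P = {p1, p2}, Q = {q1, q2, q3}, |R| ≥ 2, such that G1 contains all six edges between P and Q, no edge with both ends in Q, and (P ∪ Q, Q ∪ R) is a (non-trivial) separation of G1 of order 3. Then H has a minor isomorphic to a graph obtained from G1 either by (1) adding an edge between some p_i and some r ∈ R, or (2) splitting some q_j into two vertices q_j^1 and q_j^2 (partitioning its neighborhood) such that q_j^1 is adjacent to p1 and q_j^2 is adjacent to p2. -/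
open SimpleGraph

universe u v

/-! ### Auxiliary machinery for the proof -/

namespace SepFix

variable {U : Type u} {H : SimpleGraph U}

/-- Reachability via a walk all of whose vertices lie in `s`. -/
def ReachWithin (H : SimpleGraph U) (s : Set U) (a b : U) : Prop :=
  ∃ w : H.Walk a b, ∀ x ∈ w.support, x ∈ s

theorem ReachWithin.refl (H : SimpleGraph U) {s : Set U} {a : U} (ha : a ∈ s) :
    ReachWithin H s a a :=
  ⟨Walk.nil, by simp [ha]⟩

theorem ReachWithin.mem_left {s : Set U} {a b : U} (h : ReachWithin H s a b) : a ∈ s := by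
  obtain ⟨w, hw⟩ := h; exact hw a w.start_mem_support

theorem ReachWithin.mem_right {s : Set U} {a b : U} (h : ReachWithin H s a b) : b ∈ s := by
  obtain ⟨w, hw⟩ := h; exact hw b w.end_mem_support

theorem ReachWithin.trans {s : Set U} {a b c : U} (h1 : ReachWithin H s a b)
    (h2 : ReachWithin H s b c) : ReachWithin H s a c := by
  obtain ⟨w1, hw1⟩ := h1; obtain ⟨w2, hw2⟩ := h2
  exact ⟨w1.append w2, by
    intro x hx
    rcases (Walk.mem_support_append_iff _ _).1 hx with h | h
    · exact hw1 x h
    · exact hw2 x h⟩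

theorem ReachWithin.symm {s : Set U} {a b : U} (h : ReachWithin H s a b) :
    ReachWithin H s b a := by
  obtain ⟨w, hw⟩ := h
  exact ⟨w.reverse, by intro x hx; exact hw x (by simpa using hx)⟩

theorem ReachWithin.concat {s : Set U} {a b c : U} (h : ReachWithin H s a b)
    (hadj : H.Adj b c) (hc : c ∈ s) : ReachWithin H s a c := by
  refine h.trans ⟨hadj.toWalk, ?_⟩
  intro x hx
  simp only [Walk.support_cons, Walk.support_nil, List.mem_cons, List.mem_singleton] at hx
  rcases hx with rfl | hx
  · exact h.mem_right
  · rcases hx with rfl | h'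
    · exact hc
    · simp at h'

theorem ReachWithin.mono {s t : Set U} (hst : s ⊆ t) {a b : U} (h : ReachWithin H s a b) :
    ReachWithin H t a b := by
  obtain ⟨w, hw⟩ := h; exact ⟨w, fun x hx => hst (hw x hx)⟩

/-- A walk in an induced subgraph gives `ReachWithin`. -/
theorem reachWithin_of_induce_reachable {s : Set U} {a b : ↥s}
    (h : (H.induce s).Reachable a b) : ReachWithin H s a b := by
  obtain ⟨w⟩ := h
  induction w with
  | nil => exact ReachWithin.refl H (by exact Subtype.coe_prop _)
  | cons h p ih =>
    rename_i u v _
    refine ReachWithin.trans ⟨(?_ : H.Adj u v).toWalk, ?_⟩ ih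
    · exact h
    · intro x hx
      have hx : x ∈ [(u : U), (v : U)] := hx
      simp only [Walk.support_cons, Walk.support_nil, List.mem_cons, List.mem_singleton] at hx
      rcases hx with rfl | hx
      · exact Subtype.coe_prop _
      · rcases hx with rfl | h'
        · exact Subtype.coe_prop _
        · simp at h'

theorem induce_reachable_of_reachWithin {s : Set U} {a b : U}
    (h : ReachWithin H s a b) (ha : a ∈ s) (hb : b ∈ s) :
    (H.induce s).Reachable ⟨a, ha⟩ ⟨b, hb⟩ := by
  obtain ⟨w, hw⟩ := h
  induction w with
  | nil => rfl
  | cons hadj p ih =>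
    rename_i u v c
    have hv : v ∈ s := hw v (by simp)
    have : (H.induce s).Adj ⟨u, ha⟩ ⟨v, hv⟩ := by simpa using hadj
    exact (this.toWalk.reachable).trans (ih hv hb (fun x hx => hw x (by simp [hx])))

end SepFix

namespace SepFix

variable {U : Type u} {H : SimpleGraph U}

/-- The set of vertices reachable from `base` by walks inside `s`. -/
def reachIn (H : SimpleGraph U) (s base : Set U) : Set U :=
  {u | ∃ x ∈ base, ReachWithin H s x u}

theorem base_subset_reachIn {s base : Set U} (hbs : base ⊆ s) :
    base ⊆ reachIn H s base :=
  fun x hx => ⟨x, hx, ReachWithin.refl H (hbs hx)⟩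

theorem reachIn_subset {s base : Set U} : reachIn H s base ⊆ s :=
  fun _ ⟨_, _, h⟩ => h.mem_right

theorem reachIn_closed {s base : Set U} {a b : U} (ha : a ∈ reachIn H s base)
    (hab : H.Adj a b) (hb : b ∈ s) : b ∈ reachIn H s base := by
  obtain ⟨x, hx, h⟩ := ha
  exact ⟨x, hx, h.concat hab hb⟩

theorem reachIn_reachWithin_self {s base : Set U} {a b : U}
    (h : ReachWithin H s a b) (ha : a ∈ reachIn H s base) :
    ReachWithin H (reachIn H s base) a b := by
  obtain ⟨w, hw⟩ := h
  induction w with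
  | nil => exact ReachWithin.refl H ha
  | cons hadj p ih =>
    rename_i u v c
    have hv : v ∈ reachIn H s base := reachIn_closed ha hadj (hw v (by simp))
    have := ih hv (fun x hx => hw x (by simp [hx]))
    refine ReachWithin.trans ⟨hadj.toWalk, ?_⟩ this
    intro x hx
    simp only [Walk.support_cons, Walk.support_nil, List.mem_cons, List.mem_singleton] at hx
    rcases hx with rfl | hx
    · exact ha
    · rcases hx with rfl | h'
      · exact hv
      · simp at h'

theorem reachIn_connected {s base : Set U} (hbs : base ⊆ s)
    (hbase : (H.induce base).Connected) :
    (H.induce (reachIn H s base)).Connected := by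
  obtain ⟨x0, hx0⟩ : base.Nonempty := by
    have := hbase.nonempty
    obtain ⟨⟨x, hx⟩⟩ := this
    exact ⟨x, hx⟩
  haveI : Nonempty ↥(reachIn H s base) := ⟨⟨x0, base_subset_reachIn hbs hx0⟩⟩
  constructor
  rintro ⟨a, ha⟩ ⟨b, hb⟩
  obtain ⟨xa, hxa, hra⟩ := ha
  obtain ⟨xb, hxb, hrb⟩ := hb
  have hxa' : xa ∈ reachIn H s base := base_subset_reachIn hbs hxa
  have hxb' : xb ∈ reachIn H s base := base_subset_reachIn hbs hxb
  have h1 : ReachWithin H (reachIn H s base) xa a := reachIn_reachWithin_self hra hxa'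
  have h2 : ReachWithin H (reachIn H s base) xb b := reachIn_reachWithin_self hrb hxb'
  have hbb : ReachWithin H (reachIn H s base) xa xb := by
    have := reachWithin_of_induce_reachable (hbase.preconnected ⟨xa, hxa⟩ ⟨xb, hxb⟩)
    exact this.mono (fun y hy => base_subset_reachIn hbs hy)
  have := (h1.symm.trans hbb).trans h2
  exact induce_reachable_of_reachWithin this _ _

end SepFix

namespace SepFix

variable {U : Type u} {H : SimpleGraph U}

theorem induce_singleton_connected (H : SimpleGraph U) (z : U) :
    (H.induce {z}).Connected := by
  haveI : Nonempty ↥({z} : Set U) := ⟨⟨z, rfl⟩⟩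
  constructor
  rintro ⟨a, ha⟩ ⟨b, hb⟩
  rcases ha; rcases hb
  rfl

/-- Partition a connected induced set into two connected parts separating two
given vertices, with an edge across. -/
theorem connected_partition {Q : Set U} (hQ : (H.induce Q).Connected) {z1 z2 : U}
    (h1 : z1 ∈ Q) (h2 : z2 ∈ Q) (hne : z1 ≠ z2) :
    ∃ Z1 Z2 : Set U, Z1 ∪ Z2 = Q ∧ Disjoint Z1 Z2 ∧ z1 ∈ Z1 ∧ z2 ∈ Z2 ∧
      (H.induce Z1).Connected ∧ (H.induce Z2).Connected ∧
      ∃ a ∈ Z1, ∃ b ∈ Z2, H.Adj a b := by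
  set Z1 : Set U := reachIn H (Q \ {z2}) {z1} with hZ1
  set Z2 : Set U := Q \ Z1 with hZ2
  have hbs : ({z1} : Set U) ⊆ Q \ {z2} := by
    rintro x rfl; exact ⟨h1, hne⟩
  have hZ1sub : Z1 ⊆ Q \ {z2} := reachIn_subset
  have hz1Z1 : z1 ∈ Z1 := base_subset_reachIn hbs rfl
  have hz2Z2 : z2 ∈ Z2 := ⟨h2, fun h => (hZ1sub h).2 rfl⟩
  have hZ1Q : Z1 ⊆ Q := fun x hx => (hZ1sub hx).1
  -- walks within Q between any two points of Q
  have hwalk : ∀ a ∈ Q, ∀ b ∈ Q, ReachWithin H Q a b := by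
    intro a ha b hb
    exact reachWithin_of_induce_reachable (hQ.preconnected ⟨a, ha⟩ ⟨b, hb⟩)
  have key2 : ∀ (u v' : U) (w : H.Walk u v'), (∀ x ∈ w.support, x ∈ Q) → u ∈ Z2 →
      v' = z2 → ReachWithin H Z2 u z2 := by
    intro u v' w
    induction w with
    | nil => rintro _ hu rfl; exact ReachWithin.refl H hu
    | cons hadj p ih =>
      rename_i a v c
      rintro hw hu rfl
      by_cases ha : a = c
      · subst ha; exact ReachWithin.refl H hu
      · have hvQ : v ∈ Q := hw v (by simp)
        by_cases hvZ1 : v ∈ Z1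
        · exact absurd (reachIn_closed hvZ1 hadj.symm ⟨hu.1, ha⟩) hu.2
        · have hvZ2 : v ∈ Z2 := ⟨hvQ, hvZ1⟩
          have hrest := ih (fun x hx => hw x (by simp [hx])) hvZ2 rfl
          refine ReachWithin.trans ⟨hadj.toWalk, ?_⟩ hrest
          intro x hx
          simp only [Walk.support_cons, Walk.support_nil, List.mem_cons,
            List.mem_singleton] at hx
          rcases hx with rfl | hx
          · exact hu
          · rcases hx with rfl | h'
            · exact hvZ2
            · simp at h'
  have cross : ∀ (a v' : U) (w : H.Walk a v'), (∀ x ∈ w.support, x ∈ Q) → a ∈ Z1 →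
      v' = z2 → ∃ x ∈ Z1, ∃ y ∈ Z2, H.Adj x y := by
    intro a v' w
    induction w with
    | nil => rintro _ haZ1 rfl; exact absurd rfl (hZ1sub haZ1).2
    | cons hadj p ih =>
      rename_i a' v c
      rintro hw haZ1 rfl
      by_cases hv : v ∈ Z1
      · exact ih (fun x hx => hw x (by simp [hx])) hv rfl
      · have hvQ : v ∈ Q := hw v (by simp)
        exact ⟨a', haZ1, v, ⟨hvQ, hv⟩, hadj⟩
  have hZ2conn : (H.induce Z2).Connected := by
    haveI : Nonempty ↥Z2 := ⟨⟨z2, hz2Z2⟩⟩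
    constructor
    rintro ⟨a, ha⟩ ⟨b, hb⟩
    obtain ⟨wa, hwa⟩ := hwalk a ha.1 z2 h2
    obtain ⟨wb, hwb⟩ := hwalk b hb.1 z2 h2
    have h1 := key2 a z2 wa hwa ha rfl
    have h2' := key2 b z2 wb hwb hb rfl
    exact induce_reachable_of_reachWithin (h1.trans h2'.symm) _ _
  obtain ⟨w0, hw0⟩ := hwalk z1 h1 z2 h2
  refine ⟨Z1, Z2, ?_, ?_, hz1Z1, hz2Z2, reachIn_connected hbs (induce_singleton_connected H z1),
    hZ2conn, cross z1 z2 w0 hw0 hz1Z1 rfl⟩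
  · apply Set.Subset.antisymm
    · rintro x (hx | hx)
      · exact hZ1Q hx
      · exact hx.1
    · intro x hx
      by_cases hxZ1 : x ∈ Z1
      · exact Or.inl hxZ1
      · exact Or.inr ⟨hx, hxZ1⟩
  · exact Set.disjoint_left.mpr (fun x hx hx2 => hx2.2 hx)

end SepFix

namespace SepFix

variable {U : Type u} {H : SimpleGraph U}

theorem mindeg_three [Fintype U] (hH : WeaklyFourConnected H) (v : U) :
    3 ≤ (H.neighborSet v).ncard := by
  by_contra hlt
  push_neg at hlt
  have hs : (H.neighborSet v).ncard ≤ 2 := by omega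
  have hconn := hH.1.2 (H.neighborSet v) hs
  -- find u ≠ v outside the neighbor set
  have hcard : 3 ≤ (Set.univ \ H.neighborSet v).ncard := by
    have h1 : (Set.univ \ H.neighborSet v).ncard
        = (Set.univ : Set U).ncard - (H.neighborSet v).ncard :=
      Set.ncard_diff (Set.subset_univ _)
    have h2 : (Set.univ : Set U).ncard = Nat.card U := Set.ncard_univ U
    have h5 : 5 ≤ Nat.card U := hH.2.1
    omega
  obtain ⟨u, hu, huv⟩ := Set.exists_ne_of_one_lt_ncard (s := Set.univ \ H.neighborSet v) (by omega) v
  have hv : v ∈ ((⊤ : H.Subgraph).deleteVerts (H.neighborSet v)).verts := by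
    simp only [Subgraph.deleteVerts_verts, Subgraph.verts_top]
    exact ⟨trivial, fun h => H.irrefl h⟩
  have hu' : u ∈ ((⊤ : H.Subgraph).deleteVerts (H.neighborSet v)).verts := by
    simp only [Subgraph.deleteVerts_verts, Subgraph.verts_top]
    exact ⟨trivial, hu.2⟩
  obtain ⟨w⟩ := hconn.preconnected ⟨v, hv⟩ ⟨u, hu'⟩
  cases w with
  | nil => exact huv rfl
  | cons hadj p =>
    rename_i b
    have : H.Adj v b := by
      have := hadj
      simp only [Subgraph.coe_adj, Subgraph.deleteVerts_adj, Subgraph.verts_top,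
        Subgraph.top_adj] at this
      exact this.2.2.2.2
    have hb : (b : U) ∈ H.neighborSet v := this
    have := hadj
    simp only [Subgraph.coe_adj, Subgraph.deleteVerts_adj] at this
    exact this.2.2.2.1 hb

end SepFix

open SepFix in
/-- the separation-fixing lemma. -/
theorem separation_fixing {V U : Type u} [Fintype V] [Fintype U]
    (G1 : SimpleGraph V) (H : SimpleGraph U)
    (hH : WeaklyFourConnected H) (hminor : IsMinorOf G1 H)
    (p1 p2 q1 q2 q3 : V) (R : Set V)
    (hnodup : [p1, p2, q1, q2, q3].Nodup)
    (hPR : ({p1, p2} : Set V) ∩ R = ∅) (hQR : ({q1, q2, q3} : Set V) ∩ R = ∅)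
    (hpart : ({p1, p2} : Set V) ∪ {q1, q2, q3} ∪ R = Set.univ)
    (hR : 2 ≤ R.ncard)
    (hPQ : ∀ p ∈ ({p1, p2} : Set V), ∀ q ∈ ({q1, q2, q3} : Set V), G1.Adj p q)
    (hQ : ∀ q ∈ ({q1, q2, q3} : Set V), ∀ q' ∈ ({q1, q2, q3} : Set V), ¬ G1.Adj q q')
    (hsep : Separation G1 (({p1, p2} : Set V) ∪ {q1, q2, q3}) (({q1, q2, q3} : Set V) ∪ R)) :
    (∃ p ∈ ({p1, p2} : Set V), ∃ r ∈ R, IsMinorOf (addE G1 p r) H) ∨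
    (∃ q ∈ ({q1, q2, q3} : Set V), ∃ N1 N2 : Set V,
      N1 ∪ N2 = G1.neighborSet q ∧ Disjoint N1 N2 ∧ p1 ∈ N1 ∧ p2 ∈ N2 ∧
      IsMinorOf (splitGraph G1 q N1 N2) H) := by
  classical
  obtain ⟨η, hne, hconn, hdisj, hedge⟩ := hminor
  -- distinctness facts
  simp only [List.nodup_cons, List.mem_cons, List.mem_singleton, List.not_mem_nil,
    or_false, not_or, List.nodup_nil, and_true] at hnodup
  obtain ⟨⟨hp12, hp1q1, hp1q2, hp1q3⟩, ⟨hp2q1, hp2q2, hp2q3⟩, ⟨hq12, hq13⟩, hq23, -⟩ := hnodup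
  -- p's and q's are not in R
  have hp1R : p1 ∉ R := fun h => Set.eq_empty_iff_forall_notMem.mp hPR p1 ⟨by simp, h⟩
  have hp2R : p2 ∉ R := fun h => Set.eq_empty_iff_forall_notMem.mp hPR p2 ⟨by simp, h⟩
  have hqR : ∀ q ∈ ({q1, q2, q3} : Set V), q ∉ R := fun q hq h =>
    Set.eq_empty_iff_forall_notMem.mp hQR q ⟨hq, h⟩
  have hqp : ∀ q ∈ ({q1, q2, q3} : Set V), q ≠ p1 ∧ q ≠ p2 := by
    intro q hq
    rcases hq with rfl | rfl | rfl
    · exact ⟨Ne.symm hp1q1, Ne.symm hp2q1⟩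
    · exact ⟨Ne.symm hp1q2, Ne.symm hp2q2⟩
    · exact ⟨Ne.symm hp1q3, Ne.symm hp2q3⟩
  have hvcases : ∀ v : V, v = p1 ∨ v = p2 ∨ v ∈ ({q1, q2, q3} : Set V) ∨ v ∈ R := by
    intro v
    have hv : v ∈ (({p1, p2} : Set V) ∪ {q1, q2, q3} ∪ R) := by rw [hpart]; trivial
    rcases hv with (h | h) | h
    · rcases h with rfl | rfl
      · exact Or.inl rfl
      · exact Or.inr (Or.inl rfl)
    · exact Or.inr (Or.inr (Or.inl h))
    · exact Or.inr (Or.inr (Or.inr h))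
  -- leftover vertices and the two enlarged branch sets
  set Lo : Set U := {u | ∀ v : V, u ∉ η v} with hLo
  set S1 : Set U := η p1 ∪ Lo with hS1
  set T1 : Set U := SepFix.reachIn H S1 (η p1) with hT1
  set S2 : Set U := (η p2 ∪ Lo) \ T1 with hS2
  set T2 : Set U := SepFix.reachIn H S2 (η p2) with hT2
  have hT1sub : T1 ⊆ S1 := SepFix.reachIn_subset
  have hT2sub : T2 ⊆ S2 := SepFix.reachIn_subset
  have hT1b : ∀ v : V, v ≠ p1 → Disjoint T1 (η v) := by
    intro v hv
    refine Set.disjoint_left.mpr (fun u hu huv => ?_)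
    rcases hT1sub hu with h | h
    · exact Set.disjoint_left.mp (hdisj p1 v (Ne.symm hv)) h huv
    · exact h v huv
  have hT2b : ∀ v : V, v ≠ p2 → Disjoint T2 (η v) := by
    intro v hv
    refine Set.disjoint_left.mpr (fun u hu huv => ?_)
    rcases (hT2sub hu).1 with h | h
    · exact Set.disjoint_left.mp (hdisj p2 v (Ne.symm hv)) h huv
    · exact h v huv
  have hT1T2 : Disjoint T1 T2 :=
    Set.disjoint_left.mpr (fun u hu hu2 => (hT2sub hu2).2 hu)
  have hbase1 : η p1 ⊆ S1 := Set.subset_union_left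
  have hbase2 : η p2 ⊆ S2 := by
    intro u hu
    refine ⟨Or.inl hu, fun hT => ?_⟩
    exact Set.disjoint_left.mp (hT1b p2 (Ne.symm hp12)) hT hu
  have hp1T1 : η p1 ⊆ T1 := SepFix.base_subset_reachIn hbase1
  have hp2T2 : η p2 ⊆ T2 := SepFix.base_subset_reachIn hbase2
  have hT1conn : (H.induce T1).Connected := SepFix.reachIn_connected hbase1 (hconn p1)
  have hT2conn : (H.induce T2).Connected := SepFix.reachIn_connected hbase2 (hconn p2)
  -- the closure property: edges leaving T1 ∪ T2 go to branch sets of other vertices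
  have hkey : ∀ u ∈ T1 ∪ T2, ∀ b : U, H.Adj u b → b ∉ T1 ∪ T2 →
      ∃ v : V, v ≠ p1 ∧ v ≠ p2 ∧ b ∈ η v := by
    intro u hu b hadj hb
    by_cases hbL : b ∈ Lo
    · exfalso
      rcases hu with hu | hu
      · exact hb (Or.inl (SepFix.reachIn_closed hu hadj (Or.inr hbL)))
      · refine hb (Or.inr (SepFix.reachIn_closed hu hadj ⟨Or.inr hbL, fun hT => ?_⟩))
        exact hb (Or.inl hT)
    · simp only [hLo, Set.mem_setOf_eq, not_forall, not_not] at hbL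
      obtain ⟨v, hv⟩ := hbL
      refine ⟨v, fun h => ?_, fun h => ?_, hv⟩
      · subst h; exact hb (Or.inl (hp1T1 hv))
      · subst h; exact hb (Or.inr (hp2T2 hv))
  -- the modified model with enlarged branch sets for p1 and p2
  set η' : V → Set U := fun v => if v = p1 then T1 else if v = p2 then T2 else η v with hη'
  have hp21 : p2 ≠ p1 := fun h => hp12 h.symm
  have hη'1 : η' p1 = T1 := by rw [hη']; simp
  have hη'2 : η' p2 = T2 := by rw [hη']; simp [hp21]
  have hη'o : ∀ v : V, v ≠ p1 → v ≠ p2 → η' v = η v := by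
    intro v h1 h2; rw [hη']; simp [h1, h2]
  have hsub : ∀ v, η v ⊆ η' v := by
    intro v
    by_cases h1 : v = p1
    · rw [h1, hη'1]; exact hp1T1
    · by_cases h2 : v = p2
      · rw [h2, hη'2]; exact hp2T2
      · rw [hη'o v h1 h2]
  have hne' : ∀ v, (η' v).Nonempty := fun v => (hne v).mono (hsub v)
  have hconn' : ∀ v, (H.induce (η' v)).Connected := by
    intro v
    by_cases h1 : v = p1
    · rw [h1, hη'1]; exact hT1conn
    · by_cases h2 : v = p2
      · rw [h2, hη'2]; exact hT2conn
      · rw [hη'o v h1 h2]; exact hconn v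
  have hη'cases : ∀ v : V, ∀ u ∈ η' v, u ∈ T1 ∨ u ∈ T2 ∨ u ∈ η v := by
    intro v u hu
    by_cases h1 : v = p1
    · rw [h1, hη'1] at hu; exact Or.inl hu
    · by_cases h2 : v = p2
      · rw [h2, hη'2] at hu; exact Or.inr (Or.inl hu)
      · rw [hη'o v h1 h2] at hu; exact Or.inr (Or.inr hu)
  have hdisj' : ∀ a b : V, a ≠ b → Disjoint (η' a) (η' b) := by
    have key : ∀ a b : V, a ≠ b → ∀ u, u ∈ η' a → u ∈ η' b → False := by
      intro a b hab u hua hub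
      by_cases ha1 : a = p1
      · rw [ha1, hη'1] at hua
        by_cases hb2 : b = p2
        · rw [hb2, hη'2] at hub
          exact Set.disjoint_left.mp hT1T2 hua hub
        · have hb1 : b ≠ p1 := fun h => hab (h ▸ ha1 ▸ rfl)
          rw [hη'o b hb1 hb2] at hub
          exact Set.disjoint_left.mp (hT1b b hb1) hua hub
      · by_cases ha2 : a = p2
        · rw [ha2, hη'2] at hua
          by_cases hb1 : b = p1
          · rw [hb1, hη'1] at hub
            exact Set.disjoint_left.mp hT1T2 hub hua
          · have hb2 : b ≠ p2 := fun h => hab (h ▸ ha2 ▸ rfl)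
            rw [hη'o b hb1 hb2] at hub
            exact Set.disjoint_left.mp (hT2b b hb2) hua hub
        · rw [hη'o a ha1 ha2] at hua
          by_cases hb1 : b = p1
          · rw [hb1, hη'1] at hub
            exact Set.disjoint_left.mp (hT1b a ha1) hub hua
          · by_cases hb2 : b = p2
            · rw [hb2, hη'2] at hub
              exact Set.disjoint_left.mp (hT2b a ha2) hub hua
            · rw [hη'o b hb1 hb2] at hub
              exact Set.disjoint_left.mp (hdisj a b hab) hua hub
    exact fun a b hab => Set.disjoint_left.mpr (fun u hua hub => key a b hab u hua hub)
  have hedge' : ∀ a b : V, G1.Adj a b → ∃ x ∈ η' a, ∃ y ∈ η' b, H.Adj x y := by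
    intro a b hab
    obtain ⟨x, hx, y, hy, hxy⟩ := hedge a b hab
    exact ⟨x, hsub a hx, y, hsub b hy, hxy⟩
  -- Case A : a jump from the p-side to the R-side
  by_cases cA : ∃ u ∈ T1 ∪ T2, ∃ r ∈ R, ∃ w ∈ η r, H.Adj u w
  · obtain ⟨u, hu, r, hr, w, hw, hadj⟩ := cA
    left
    have hrp1 : r ≠ p1 := fun h => hp1R (h ▸ hr)
    have hrp2 : r ≠ p2 := fun h => hp2R (h ▸ hr)
    have hηr : η' r = η r := hη'o r hrp1 hrp2
    rcases hu with hu | hu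
    · refine ⟨p1, by simp, r, hr, η', hne', hconn', hdisj', ?_⟩
      intro a b hab
      simp only [addE, SimpleGraph.sup_adj, SimpleGraph.fromEdgeSet_adj,
        Set.mem_singleton_iff] at hab
      rcases hab with hab | ⟨hab, -⟩
      · exact hedge' a b hab
      · rcases Sym2.eq_iff.mp hab with ⟨rfl, rfl⟩ | ⟨rfl, rfl⟩
        · exact ⟨u, by rw [hη'1]; exact hu, w, by rw [hηr]; exact hw, hadj⟩
        · exact ⟨w, by rw [hηr]; exact hw, u, by rw [hη'1]; exact hu, hadj.symm⟩
    · refine ⟨p2, by simp, r, hr, η', hne', hconn', hdisj', ?_⟩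
      intro a b hab
      simp only [addE, SimpleGraph.sup_adj, SimpleGraph.fromEdgeSet_adj,
        Set.mem_singleton_iff] at hab
      rcases hab with hab | ⟨hab, -⟩
      · exact hedge' a b hab
      · rcases Sym2.eq_iff.mp hab with ⟨rfl, rfl⟩ | ⟨rfl, rfl⟩
        · exact ⟨u, by rw [hη'2]; exact hu, w, by rw [hηr]; exact hw, hadj⟩
        · exact ⟨w, by rw [hηr]; exact hw, u, by rw [hη'2]; exact hu, hadj.symm⟩
  -- Case B : a split of some q
  by_cases cB : ∃ q ∈ ({q1, q2, q3} : Set V), ∃ z1 ∈ η q, ∃ z2 ∈ η q, z1 ≠ z2 ∧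
      (∃ t ∈ T1, H.Adj t z1) ∧ (∃ t ∈ T2, H.Adj t z2)
  · obtain ⟨q, hq, z1, hz1, z2, hz2, hz12, ⟨t1, ht1, hadj1⟩, ⟨t2, ht2, hadj2⟩⟩ := cB
    right
    obtain ⟨hqp1, hqp2⟩ := hqp q hq
    obtain ⟨Z1, Z2, hZuni, hZdisj, hz1Z1, hz2Z2, hZ1conn, hZ2conn, a0, ha0, b0, hb0, hab0⟩ :=
      SepFix.connected_partition (hconn q) hz1 hz2 hz12
    have hZ1sub : Z1 ⊆ η q := hZuni ▸ Set.subset_union_left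
    have hZ2sub : Z2 ⊆ η q := hZuni ▸ Set.subset_union_right
    -- the neighbourhood partition
    set N1 : Set V := {a | G1.Adj q a ∧ (a = p1 ∨ (a ≠ p2 ∧ ∃ x ∈ η' a, ∃ y ∈ Z1, H.Adj x y))}
      with hN1
    set N2 : Set V := G1.neighborSet q \ N1 with hN2def
    have hN1nbr : N1 ⊆ G1.neighborSet q := fun a ha => ha.1
    have hp1N1 : p1 ∈ N1 := ⟨(hPQ p1 (by simp) q hq).symm, Or.inl rfl⟩
    have hp2N2 : p2 ∈ N2 := by
      refine ⟨(hPQ p2 (by simp) q hq).symm, fun h => ?_⟩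
      rcases h.2 with h | h
      · exact hp12 h.symm
      · exact h.1 rfl
    refine ⟨q, hq, N1, N2, ?_, Set.disjoint_sdiff_right, hp1N1, hp2N2, ?_⟩
    · apply Set.Subset.antisymm
      · rintro a (ha | ha)
        · exact hN1nbr ha
        · exact ha.1
      · intro a ha
        by_cases h : a ∈ N1
        · exact Or.inl h
        · exact Or.inr ⟨ha, h⟩
    -- the minor model for the split graph
    set g : Option V → Set U := fun o => Option.rec Z2 (fun a => if a = q then Z1 else η' a) o
      with hg
    have hgnone : g none = Z2 := rfl
    have hgq : g (some q) = Z1 := by rw [hg]; simp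
    have hgo : ∀ a : V, a ≠ q → g (some a) = η' a := by intro a ha; rw [hg]; simp [ha]
    have hZ1b : ∀ b : V, b ≠ q → Disjoint Z1 (η' b) := by
      intro b hb
      refine Set.disjoint_left.mpr (fun u hu hub => ?_)
      rcases hη'cases b u hub with h | h | h
      · exact Set.disjoint_left.mp (hT1b q hqp1) h (hZ1sub hu)
      · exact Set.disjoint_left.mp (hT2b q hqp2) h (hZ1sub hu)
      · exact Set.disjoint_left.mp (hdisj q b (fun he => hb he.symm)) (hZ1sub hu) h
    have hZ2b : ∀ b : V, b ≠ q → Disjoint Z2 (η' b) := by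
      intro b hb
      refine Set.disjoint_left.mpr (fun u hu hub => ?_)
      rcases hη'cases b u hub with h | h | h
      · exact Set.disjoint_left.mp (hT1b q hqp1) h (hZ2sub hu)
      · exact Set.disjoint_left.mp (hT2b q hqp2) h (hZ2sub hu)
      · exact Set.disjoint_left.mp (hdisj q b (fun he => hb he.symm)) (hZ2sub hu) h
    refine ⟨g, ?_, ?_, ?_, ?_⟩
    · rintro (_ | a)
      · exact ⟨b0, hb0⟩
      · by_cases ha : a = q
        · rw [ha, hgq]; exact ⟨a0, ha0⟩
        · rw [hgo a ha]; exact hne' a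
    · rintro (_ | a)
      · exact hZ2conn
      · by_cases ha : a = q
        · rw [ha, hgq]; exact hZ1conn
        · rw [hgo a ha]; exact hconn' a
    · rintro (_ | a) (_ | b) hab
      · exact absurd rfl hab
      · rw [hgnone]
        by_cases hb : b = q
        · rw [hb, hgq]; exact hZdisj.symm
        · rw [hgo b hb]; exact hZ2b b hb
      · rw [hgnone]
        by_cases ha : a = q
        · rw [ha, hgq]; exact hZdisj
        · rw [hgo a ha]; exact (hZ2b a ha).symm
      · have hab' : a ≠ b := fun h => hab (h ▸ rfl)
        by_cases ha : a = q
        · have hb : b ≠ q := fun h => hab' (ha.trans h.symm)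
          rw [ha, hgq, hgo b hb]; exact hZ1b b hb
        · by_cases hb : b = q
          · rw [hb, hgq, hgo a ha]; exact (hZ1b a ha).symm
          · rw [hgo a ha, hgo b hb]; exact hdisj' a b hab'
    · -- edges of the split graph are realized
      have hrel : ∀ x y : Option V,
          ((∃ a b, x = some a ∧ y = some b ∧ a ≠ q ∧ b ≠ q ∧ G1.Adj a b) ∨
            (x = some q ∧ ∃ b ∈ N1, y = some b) ∨
            (x = none ∧ ∃ b ∈ N2, y = some b) ∨
            (x = none ∧ y = some q)) →
          ∃ u ∈ g x, ∃ w ∈ g y, H.Adj u w := by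
        rintro x y (⟨a, b, rfl, rfl, haq, hbq, hab⟩ | ⟨rfl, b, hbN, rfl⟩ |
          ⟨rfl, b, hbN, rfl⟩ | ⟨rfl, rfl⟩)
        · rw [hgo a haq, hgo b hbq]; exact hedge' a b hab
        · have hbq : b ≠ q := fun h => G1.irrefl (h ▸ hbN.1)
          rw [hgq, hgo b hbq]
          rcases hbN.2 with rfl | ⟨hbp2, x, hx, y, hy, hxy⟩
          · exact ⟨z1, hz1Z1, t1, by rw [hη'1]; exact ht1, hadj1.symm⟩
          · exact ⟨y, hy, x, hx, hxy.symm⟩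
        · have hbq : b ≠ q := fun h => G1.irrefl (h ▸ hbN.1)
          rw [hgnone, hgo b hbq]
          by_cases hbp2 : b = p2
          · rw [hbp2, hη'2]
            exact ⟨z2, hz2Z2, t2, ht2, hadj2.symm⟩
          · have hbp1 : b ≠ p1 := fun h => (h ▸ hbN.2 : p1 ∉ N1) hp1N1
            have hnoZ1 : ¬ ∃ x ∈ η' b, ∃ y ∈ Z1, H.Adj x y := by
              intro hex
              exact hbN.2 ⟨hbN.1, Or.inr ⟨hbp2, hex⟩⟩
            obtain ⟨x, hx, y, hy, hxy⟩ := hedge q b hbN.1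
            have hyb : y ∈ η' b := hsub b hy
            have hxZ : x ∈ Z1 ∨ x ∈ Z2 := by
              have : x ∈ Z1 ∪ Z2 := hZuni.symm ▸ hx
              exact this
            rcases hxZ with hxZ | hxZ
            · exact absurd ⟨y, hyb, x, hxZ, hxy.symm⟩ hnoZ1
            · exact ⟨x, hxZ, y, hyb, hxy⟩
        · rw [hgnone, hgq]
          exact ⟨b0, hb0, a0, ha0, hab0.symm⟩
      intro x y hxy
      rw [splitGraph, SimpleGraph.fromRel_adj] at hxy
      rcases hxy.2 with h | h
      · exact hrel x y h
      · obtain ⟨u, hu, w, hw, huw⟩ := hrel y x h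
        exact ⟨w, hw, u, hu, huw.symm⟩
  -- Case C : impossible by weak 4-connectivity
  exfalso
  set qq : Fin 3 → V := ![q1, q2, q3] with hqq
  have hqqmem : ∀ j : Fin 3, qq j ∈ ({q1, q2, q3} : Set V) := by
    intro j; fin_cases j <;> simp [hqq]
  have hqqinj : ∀ j j' : Fin 3, j ≠ j' → qq j ≠ qq j' := by
    intro j j' hjj'
    fin_cases j <;> fin_cases j' <;>
      first
        | exact absurd rfl hjj'
        | exact fun h => hq12 h
        | exact fun h => hq12 h.symm
        | exact fun h => hq13 h
        | exact fun h => hq13 h.symm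
        | exact fun h => hq23 h
        | exact fun h => hq23 h.symm
  have huniq : ∀ j : Fin 3, ∀ u ∈ η (qq j), ∀ u' ∈ η (qq j),
      (∃ t ∈ T1, H.Adj t u) → (∃ t ∈ T2, H.Adj t u') → u = u' := by
    intro j u hu u' hu' h1 h2
    by_contra hne'
    exact cB ⟨qq j, hqqmem j, u, hu, u', hu', hne', h1, h2⟩
  have hdata : ∀ j : Fin 3, ∃ y, y ∈ η (qq j) ∧ (∃ t ∈ T1, H.Adj t y) ∧
      (∃ t ∈ T2, H.Adj t y) ∧
      ∀ u ∈ η (qq j), ((∃ t ∈ T1, H.Adj t u) ∨ (∃ t ∈ T2, H.Adj t u)) → u = y := by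
    intro j
    obtain ⟨x1, hx1, y, hy, hxy⟩ := hedge p1 (qq j) (hPQ p1 (by simp) (qq j) (hqqmem j))
    obtain ⟨x2, hx2, y', hy', hxy'⟩ := hedge p2 (qq j) (hPQ p2 (by simp) (qq j) (hqqmem j))
    have hT1y : ∃ t ∈ T1, H.Adj t y := ⟨x1, hp1T1 hx1, hxy⟩
    have hT2y' : ∃ t ∈ T2, H.Adj t y' := ⟨x2, hp2T2 hx2, hxy'⟩
    have hyy' : y = y' := huniq j y hy y' hy' hT1y hT2y'
    refine ⟨y, hy, hT1y, hyy' ▸ hT2y', ?_⟩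
    intro u hu hatt
    rcases hatt with h | h
    · exact (huniq j u hu y' hy' h hT2y').trans hyy'.symm
    · exact (huniq j y hy u hu hT1y h).symm
  choose yy hymem hyT1 hyT2 hyuniq using hdata
  choose t1f ht1f hadjt1 using hyT1
  choose t2f ht2f hadjt2 using hyT2
  have hyinj : ∀ j j' : Fin 3, yy j = yy j' → j = j' := by
    intro j j' h
    by_contra hjj'
    exact Set.disjoint_left.mp (hdisj (qq j) (qq j') (hqqinj j j' hjj'))
      (hymem j) (h ▸ hymem j')
  have hyB : ∀ j : Fin 3, yy j ∉ T1 ∪ T2 := by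
    intro j h
    obtain ⟨h1, h2⟩ := hqp (qq j) (hqqmem j)
    rcases h with h | h
    · exact Set.disjoint_left.mp (hT1b (qq j) h1) h (hymem j)
    · exact Set.disjoint_left.mp (hT2b (qq j) h2) h (hymem j)
  -- the order-3 separation of H
  set A : Set U := (T1 ∪ T2) ∪ Set.range yy with hA
  set B : Set U := (T1 ∪ T2)ᶜ with hB
  have hsepH : Separation H A B := by
    constructor
    · ext u
      simp only [hA, hB, Set.mem_union, Set.mem_compl_iff, Set.mem_univ, iff_true]
      by_cases h : u ∈ T1 ∪ T2
      · rcases h with h | h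
        · exact Or.inl (Or.inl (Or.inl h))
        · exact Or.inl (Or.inl (Or.inr h))
      · exact Or.inr h
    · intro a ha b hb hadj
      have haT : a ∈ T1 ∪ T2 := by
        have := ha.2
        simp only [hB, Set.mem_compl_iff, not_not] at this
        exact this
      have hbT : b ∉ T1 ∪ T2 := fun h => hb.2 (Or.inl h)
      obtain ⟨v, hvp1, hvp2, hbv⟩ := hkey a haT b hadj hbT
      rcases hvcases v with rfl | rfl | hv | hv
      · exact hvp1 rfl
      · exact hvp2 rfl
      · have : ∃ j : Fin 3, v = qq j := by
          rcases hv with rfl | rfl | rfl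
          · exact ⟨0, rfl⟩
          · exact ⟨1, rfl⟩
          · exact ⟨2, rfl⟩
        obtain ⟨j, rfl⟩ := this
        have hatt : (∃ t ∈ T1, H.Adj t b) ∨ (∃ t ∈ T2, H.Adj t b) := by
          rcases haT with h | h
          · exact Or.inl ⟨a, h, hadj⟩
          · exact Or.inr ⟨a, h, hadj⟩
        have := hyuniq j b hbv hatt
        exact hb.2 (Or.inr ⟨j, this.symm⟩)
      · exact cA ⟨a, haT, v, hv, b, hbv, hadj⟩
  have hABeq : A ∩ B = Set.range yy := by
    ext u
    constructor
    · rintro ⟨hua, hub⟩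
      simp only [hB, Set.mem_compl_iff] at hub
      rcases hua with h | h
      · exact absurd h hub
      · exact h
    · rintro ⟨j, rfl⟩
      exact ⟨Or.inr ⟨j, rfl⟩, hyB j⟩
  have hrange : Set.range yy = {yy 0, yy 1, yy 2} := by
    ext u
    constructor
    · rintro ⟨j, rfl⟩
      fin_cases j
      · exact Or.inl rfl
      · exact Or.inr (Or.inl rfl)
      · exact Or.inr (Or.inr rfl)
    · rintro (rfl | rfl | rfl)
      · exact ⟨0, rfl⟩
      · exact ⟨1, rfl⟩
      · exact ⟨2, rfl⟩
  have horder : (A ∩ B).ncard ≤ 3 := by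
    rw [hABeq, hrange]
    calc ({yy 0, yy 1, yy 2} : Set U).ncard
        ≤ ({yy 1, yy 2} : Set U).ncard + 1 := Set.ncard_insert_le _ _
      _ ≤ (({yy 2} : Set U).ncard + 1) + 1 := by
          exact Nat.add_le_add_right (Set.ncard_insert_le _ _) 1
      _ = 3 := by rw [Set.ncard_singleton]
  rcases hH.2.2 A B hsepH horder with hle | hle
  · -- side A has at least six edges
    set tt : Fin 2 → Fin 3 → U := fun i j => if i = 0 then t1f j else t2f j with htt
    have httmem : ∀ i j, (i = 0 → tt i j ∈ T1) ∧ (i ≠ 0 → tt i j ∈ T2) := by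
      intro i j
      constructor
      · intro h; rw [htt]; simp [h]; exact ht1f j
      · intro h; rw [htt]; simp [h]; exact ht2f j
    have httT : ∀ i j, tt i j ∈ T1 ∪ T2 := by
      intro i j
      by_cases h : i = 0
      · exact Or.inl ((httmem i j).1 h)
      · exact Or.inr ((httmem i j).2 h)
    have httadj : ∀ i j, H.Adj (tt i j) (yy j) := by
      intro i j
      by_cases h : i = 0
      · rw [htt]; simp [h]; exact hadjt1 j
      · rw [htt]; simp [h]; exact hadjt2 j
    set f : Fin 2 × Fin 3 → Sym2 U := fun ij => s(tt ij.1 ij.2, yy ij.2) with hf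
    have hinj : Function.Injective f := by
      rintro ⟨i, j⟩ ⟨i', j'⟩ h
      simp only [hf] at h
      rcases Sym2.eq_iff.mp h with ⟨h1, h2⟩ | ⟨h1, h2⟩
      · have hjj' : j = j' := hyinj j j' h2
        subst hjj'
        have hii' : i = i' := by
          by_cases hi : i = 0
          · by_cases hi' : i' = 0
            · rw [hi, hi']
            · exfalso
              exact Set.disjoint_left.mp hT1T2 ((httmem i j).1 hi)
                (h1 ▸ (httmem i' j).2 hi')
          · by_cases hi' : i' = 0
            · exfalso
              exact Set.disjoint_left.mp hT1T2 ((httmem i' j).1 hi')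
                (h1 ▸ (httmem i j).2 hi)
            · omega
        rw [hii']
      · exact absurd (h1 ▸ httT i j) (hyB j')
    have hsubA : f '' Set.univ ⊆ inducedEdges H A := by
      rintro e ⟨⟨i, j⟩, -, rfl⟩
      refine ⟨H.mem_edgeSet.mpr (httadj i j), ?_⟩
      intro x hx
      rcases Sym2.mem_iff.mp hx with rfl | rfl
      · exact Or.inl (httT i j)
      · exact Or.inr ⟨j, rfl⟩
    have hcard6 : (f '' Set.univ).ncard = 6 := by
      rw [Set.ncard_image_of_injective _ hinj, Set.ncard_univ]
      simp [Nat.card_eq_fintype_card]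
    have := Set.ncard_le_ncard hsubA (Set.toFinite _)
    omega
  · -- side B has at least five edges
    obtain ⟨r1, r2, hr1, hr2, hr12⟩ := (Set.one_lt_ncard_iff R.toFinite).mp (by omega)
    obtain ⟨w1, hw1⟩ := hne r1
    obtain ⟨w2, hw2⟩ := hne r2
    have hwB : ∀ (r : V), r ∈ R → ∀ w ∈ η r, w ∈ B := by
      intro r hr w hw
      simp only [hB, Set.mem_compl_iff]
      intro hT
      obtain ⟨h1, h2⟩ : r ≠ p1 ∧ r ≠ p2 :=
        ⟨fun h => hp1R (h ▸ hr), fun h => hp2R (h ▸ hr)⟩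
      rcases hT with h | h
      · exact Set.disjoint_left.mp (hT1b r h1) h hw
      · exact Set.disjoint_left.mp (hT2b r h2) h hw
    have hnbrB : ∀ (r : V), r ∈ R → ∀ w ∈ η r, ∀ u, H.Adj w u → u ∈ B := by
      intro r hr w hw u hadj
      simp only [hB, Set.mem_compl_iff]
      intro hT
      exact cA ⟨u, hT, r, hr, w, hw, hadj.symm⟩
    set E1 : Set (Sym2 U) := (fun u => s(w1, u)) '' H.neighborSet w1 with hE1
    set E2 : Set (Sym2 U) := (fun u => s(w2, u)) '' H.neighborSet w2 with hE2
    have hinjE : ∀ w : U, Set.InjOn (fun u => s(w, u)) (H.neighborSet w) := by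
      intro w u hu u' hu' h
      simp only at h
      rcases Sym2.eq_iff.mp h with ⟨-, h2⟩ | ⟨h1, h2⟩
      · exact h2
      · exact absurd (h1 ▸ hu') (H.irrefl)
    have hE1card : E1.ncard = (H.neighborSet w1).ncard :=
      Set.ncard_image_of_injOn (hinjE w1)
    have hE2card : E2.ncard = (H.neighborSet w2).ncard :=
      Set.ncard_image_of_injOn (hinjE w2)
    have hEsub : E1 ∪ E2 ⊆ inducedEdges H B := by
      rintro e (⟨u, hu, rfl⟩ | ⟨u, hu, rfl⟩)
      · refine ⟨H.mem_edgeSet.mpr hu, ?_⟩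
        intro x hx
        rcases Sym2.mem_iff.mp hx with rfl | rfl
        · exact hwB r1 hr1 x hw1
        · exact hnbrB r1 hr1 w1 hw1 x hu
      · refine ⟨H.mem_edgeSet.mpr hu, ?_⟩
        intro x hx
        rcases Sym2.mem_iff.mp hx with rfl | rfl
        · exact hwB r2 hr2 x hw2
        · exact hnbrB r2 hr2 w2 hw2 x hu
    have hw12 : w1 ≠ w2 := by
      intro h
      exact Set.disjoint_left.mp (hdisj r1 r2 hr12) hw1 (h ▸ hw2)
    have hinter : E1 ∩ E2 ⊆ {s(w1, w2)} := by
      rintro e ⟨⟨u, hu, rfl⟩, ⟨u', hu', he⟩⟩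
      simp only at he
      rcases Sym2.eq_iff.mp he.symm with ⟨h1, h2⟩ | ⟨h1, h2⟩
      · exact absurd h1 hw12
      · rw [← h2]; rfl
    have hintercard : (E1 ∩ E2).ncard ≤ 1 := by
      have := Set.ncard_le_ncard hinter (Set.toFinite _)
      simpa [Set.ncard_singleton] using this
    have hcup := Set.ncard_union_add_ncard_inter E1 E2 (Set.toFinite _) (Set.toFinite _)
    have hunle := Set.ncard_le_ncard hEsub (Set.toFinite _)
    have hd1 := SepFix.mindeg_three hH w1
    have hd2 := SepFix.mindeg_three hH w2
    omega
end
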